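/- arXiv:2409.12502 — 5 statements merged into one kernel-verified Lean document; each statement's English description precedes it below -/
import Mathlib

section
/- For every μ ∈ 𝐌 and every p ∈ [0,1), the pseudo-Lorenz and Lorenz functions satisfy Λ_μ(p) − L_μ(p) = (Q_μ(p)/m_μ) · (F_μ(Q_μ(p)) − p). -/
open MeasureTheory Filter Topology

noncomputable section

/-- The mean of a measure on `ℝ`. -/
def mMean (μ : Measure ℝ) : ℝ := ∫ x, x ∂μ

/-- `μ ∈ 𝐌`: a Borel probability measure on `ℝ₊` (modelled as a measure on `ℝ` giving no
mass to negative numbers) with finite nonzero mean. -/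
def MemM (μ : Measure ℝ) : Prop :=
  IsProbabilityMeasure μ ∧ μ {x | x < 0} = 0 ∧ Integrable id μ ∧ 0 < mMean μ

/-- The cumulative distribution function `F_μ(x) = μ([0,x])`. -/
def cdfR (μ : Measure ℝ) (x : ℝ) : ℝ := (μ (Set.Icc 0 x)).toReal

/-- The quantile function `Q_μ(p) = inf {x ∈ ℝ₊ : F_μ(x) ≥ p}`. -/
def quant (μ : Measure ℝ) (p : ℝ) : ℝ := sInf {x : ℝ | 0 ≤ x ∧ p ≤ cdfR μ x}

/-- The Lorenz function `L_μ(p) = (∫_0^p Q_μ(t) dt) / m_μ`. -/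
def lorenz (μ : Measure ℝ) (p : ℝ) : ℝ := (∫ t in (0:ℝ)..p, quant μ t) / mMean μ

/-- The pseudo-Lorenz function `Λ_μ(p) = (∫_{[0,Q_μ(p)]} u dμ(u)) / m_μ` for `p ∈ [0,1)`,
with `Λ_μ(1) = 1`. -/
def pseudoLorenz (μ : Measure ℝ) (p : ℝ) : ℝ :=
  if p = 1 then 1 else (∫ u in Set.Icc (0:ℝ) (quant μ p), u ∂μ) / mMean μ

/-- The Gini coefficient `G(μ) = (∫∫ |x-y| d(μ⊗μ)) / (2 m_μ)`. -/
def gini (μ : Measure ℝ) : ℝ := (∫ z : ℝ × ℝ, |z.1 - z.2| ∂(μ.prod μ)) / (2 * mMean μ)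

/-- The Hoover coefficient `H(μ) = (∫ |x - m_μ| dμ) / (2 m_μ)`. -/
def hoover (μ : Measure ℝ) : ℝ := (∫ x, |x - mMean μ| ∂μ) / (2 * mMean μ)

/-- The Wasserstein-1 distance `W₁(μ,ν) = ∫_0^1 |Q_μ - Q_ν|`. -/
def W1 (μ ν : Measure ℝ) : ℝ := ∫ t in (0:ℝ)..1, |quant μ t - quant ν t|

/-- Weak convergence of a sequence of measures: convergence of integrals of all bounded
continuous functions. -/
def WeakCv (μs : ℕ → Measure ℝ) (ν : Measure ℝ) : Prop :=
  ∀ f : ℝ → ℝ, Continuous f → (∃ C : ℝ, ∀ x, |f x| ≤ C) →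
    Tendsto (fun n => ∫ x, f x ∂(μs n)) atTop (𝓝 (∫ x, f x ∂ν))

/-- Uniform integrability of a family of measures on `ℝ₊`:
`sup_i ∫_{(α,∞)} x dμ_i(x) → 0` as `α → +∞`. -/
def UnifInt {ι : Type*} (μs : ι → Measure ℝ) : Prop :=
  ∀ ε > (0:ℝ), ∃ A : ℝ, ∀ α ≥ A, ∀ i, (∫ x in Set.Ioi α, x ∂(μs i)) ≤ ε

end

namespace PLaux

variable {μ : Measure ℝ}

lemma cdf_mono (hμ : MemM μ) : Monotone (cdfR μ) := by
  have := hμ.1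
  intro a b hab
  exact ENNReal.toReal_mono (measure_ne_top μ _)
    (measure_mono (Set.Icc_subset_Icc_right hab))

lemma cdf_nonneg (μ : Measure ℝ) (x : ℝ) : 0 ≤ cdfR μ x := ENNReal.toReal_nonneg

lemma quant_nonneg (μ : Measure ℝ) (t : ℝ) : 0 ≤ quant μ t :=
  Real.sInf_nonneg fun _ hx => hx.1

lemma setS_bdd (μ : Measure ℝ) (t : ℝ) : BddBelow {x : ℝ | 0 ≤ x ∧ t ≤ cdfR μ x} :=
  ⟨0, fun _ hx => hx.1⟩

lemma setS_nonempty (hμ : MemM μ) {t : ℝ} (ht : t < 1) :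
    {x : ℝ | 0 ≤ x ∧ t ≤ cdfR μ x}.Nonempty := by
  have hprob := hμ.1
  have hU : (⋃ n : ℕ, Set.Icc (0:ℝ) n) = Set.Ici 0 := by
    ext x
    simp only [Set.mem_iUnion, Set.mem_Icc, Set.mem_Ici]
    constructor
    · rintro ⟨n, h0, _⟩; exact h0
    · intro h0; obtain ⟨n, hn⟩ := exists_nat_ge x; exact ⟨n, h0, hn⟩
  have hIci : μ (Set.Ici 0) = 1 := by
    have h1 : μ Set.univ = 1 := measure_univ
    have h2 : μ (Set.Iio 0) = 0 := hμ.2.1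
    have hle : μ Set.univ ≤ μ (Set.Iio 0) + μ (Set.Ici 0) := by
      rw [← Set.Iio_union_Ici (a := (0:ℝ))]; exact measure_union_le _ _
    have : (1:ENNReal) ≤ μ (Set.Ici 0) := by rwa [h1, h2, zero_add] at hle
    exact le_antisymm prob_le_one this
  have htd : Tendsto (fun n : ℕ => μ (Set.Icc (0:ℝ) n)) atTop (𝓝 1) := by
    have := tendsto_measure_iUnion_atTop (μ := μ)
      (s := fun n : ℕ => Set.Icc (0:ℝ) n)
      (fun n m hnm => Set.Icc_subset_Icc_right (by exact_mod_cast hnm))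
    rwa [hU, hIci] at this
  have hlt : ENNReal.ofReal t < 1 := ENNReal.ofReal_lt_one.2 ht
  obtain ⟨n, hn⟩ := (htd.eventually_const_lt hlt).exists
  refine ⟨(n : ℝ), Nat.cast_nonneg n, ?_⟩
  exact (ENNReal.ofReal_le_iff_le_toReal (measure_ne_top μ _)).1 hn.le

lemma cdf_quant_ge (hμ : MemM μ) {t : ℝ} (ht : t < 1) : t ≤ cdfR μ (quant μ t) := by
  have hne := setS_nonempty hμ ht
  set S := {x : ℝ | 0 ≤ x ∧ t ≤ cdfR μ x} with hS
  set q := quant μ t with hqdef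
  have hqS : q = sInf S := rfl
  -- for each n, there is x ∈ S with x < q + 1/(n+1)
  have key : ∀ n : ℕ, t ≤ cdfR μ (q + 1/(n+1)) := by
    intro n
    have hpos : (0:ℝ) < 1/(n+1) := by positivity
    have hlt : sInf S < q + 1/(n+1) := by rw [← hqS]; linarith
    obtain ⟨x, hxS, hx⟩ := exists_lt_of_csInf_lt hne hlt
    exact hxS.2.trans (cdf_mono hμ hx.le)
  have hiInter : (⋂ n : ℕ, Set.Icc (0:ℝ) (q + 1/(n+1))) = Set.Icc 0 q := by
    ext x
    simp only [Set.mem_iInter, Set.mem_Icc]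
    constructor
    · intro h
      refine ⟨(h 0).1, ?_⟩
      by_contra hxq
      push_neg at hxq
      obtain ⟨n, hn⟩ := exists_nat_one_div_lt (sub_pos.2 hxq)
      have := (h n).2
      have : x ≤ q + 1/(n+1) := by exact_mod_cast this
      linarith
    · intro h n
      have hpos : (0:ℝ) < 1/(n+1) := by positivity
      exact ⟨h.1, by linarith [h.2]⟩
  have := hμ.1
  have htd : Tendsto (fun n : ℕ => μ (Set.Icc (0:ℝ) (q + 1/(n+1)))) atTop
      (𝓝 (μ (Set.Icc 0 q))) := by
    have := tendsto_measure_iInter_atTop (μ := μ)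
      (s := fun n : ℕ => Set.Icc (0:ℝ) (q + 1/(n+1)))
      (fun n => measurableSet_Icc.nullMeasurableSet)
      (fun n m hnm => Set.Icc_subset_Icc_right (by
        have : (1:ℝ)/(m+1) ≤ 1/(n+1) := by
          apply one_div_le_one_div_of_le (by positivity)
          exact_mod_cast Nat.add_le_add_right hnm 1
        linarith))
      ⟨0, measure_ne_top μ _⟩
    rwa [hiInter] at this
  have htd' : Tendsto (fun n : ℕ => cdfR μ (q + 1/(n+1))) atTop (𝓝 (cdfR μ q)) :=
    (ENNReal.tendsto_toReal (measure_ne_top μ _)).comp htd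
  exact ge_of_tendsto' htd' key

lemma quant_le_iff (hμ : MemM μ) {t x : ℝ} (ht : t < 1) (hx : 0 ≤ x) :
    quant μ t ≤ x ↔ t ≤ cdfR μ x := by
  constructor
  · intro h
    exact (cdf_quant_ge hμ ht).trans (cdf_mono hμ h)
  · intro h
    exact csInf_le (setS_bdd μ t) ⟨hx, h⟩

lemma cdf_lt_of_lt_quant (hμ : MemM μ) {t x : ℝ} (hx : 0 ≤ x) (hxq : x < quant μ t) :
    cdfR μ x < t := by
  by_contra h
  push_neg at h
  exact absurd (csInf_le (setS_bdd μ t) ⟨hx, h⟩) (not_le.2 hxq)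

lemma quant_mono (hμ : MemM μ) {s t : ℝ} (hst : s ≤ t) (ht : t < 1) :
    quant μ s ≤ quant μ t := by
  refine csInf_le_csInf (setS_bdd μ s) (setS_nonempty hμ ht) ?_
  intro x hx
  exact ⟨hx.1, hst.trans hx.2⟩

/-- Layer-cake computation for the pseudo-Lorenz numerator. -/
lemma A_eq (hμ : MemM μ) {p : ℝ} (hp : p ∈ Set.Ico (0:ℝ) 1) :
    ∫ u in Set.Icc (0:ℝ) (quant μ p), u ∂μ
      = ∫ x in Set.Ioc (0:ℝ) (quant μ p), (cdfR μ (quant μ p) - cdfR μ x) := by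
  have := hμ.1
  set q := quant μ p with hq
  have hq0 : 0 ≤ q := quant_nonneg μ p
  have hint : Integrable (fun u : ℝ => u) (μ.restrict (Set.Icc 0 q)) := hμ.2.2.1.restrict
  have hnn : 0 ≤ᵐ[μ.restrict (Set.Icc 0 q)] fun u : ℝ => u :=
    (ae_restrict_iff' measurableSet_Icc).2 (ae_of_all _ fun x hx => hx.1)
  rw [show (∫ u in Set.Icc (0:ℝ) q, u ∂μ) = ∫ u, (fun u : ℝ => u) u ∂(μ.restrict (Set.Icc 0 q))
      from rfl, hint.integral_eq_integral_meas_lt hnn]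
  have hstep : ∀ x ∈ Set.Ioi (0:ℝ),
      ((μ.restrict (Set.Icc 0 q)) {a : ℝ | x < a}).toReal
        = Set.indicator (Set.Ioc 0 q) (fun x => cdfR μ q - cdfR μ x) x := by
    intro x hx
    have hx0 : (0:ℝ) < x := hx
    have hset : {a : ℝ | x < a} = Set.Ioi x := rfl
    rw [hset, Measure.restrict_apply measurableSet_Ioi]
    have hinter : Set.Ioi x ∩ Set.Icc 0 q = Set.Ioc x q := by
      ext a
      simp only [Set.mem_inter_iff, Set.mem_Ioi, Set.mem_Icc, Set.mem_Ioc]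
      constructor
      · rintro ⟨h1, _, h3⟩; exact ⟨h1, h3⟩
      · rintro ⟨h1, h2⟩; exact ⟨h1, (hx0.trans h1).le, h2⟩
    rw [hinter]
    by_cases hxq : x ≤ q
    · have hmem : x ∈ Set.Ioc (0:ℝ) q := ⟨hx0, hxq⟩
      rw [Set.indicator_of_mem hmem]
      have hdiff : Set.Ioc x q = Set.Icc 0 q \ Set.Icc 0 x := by
        ext a
        simp only [Set.mem_Ioc, Set.mem_diff, Set.mem_Icc, not_and, not_le]
        constructor
        · rintro ⟨h1, h2⟩; exact ⟨⟨(hx0.trans h1).le, h2⟩, fun _ => h1⟩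
        · rintro ⟨⟨h0, h2⟩, h3⟩; exact ⟨h3 h0, h2⟩
      rw [hdiff, measure_diff (Set.Icc_subset_Icc_right hxq)
        measurableSet_Icc.nullMeasurableSet (measure_ne_top μ _),
        ENNReal.toReal_sub_of_le (measure_mono (Set.Icc_subset_Icc_right hxq))
          (measure_ne_top μ _)]
      rfl
    · push_neg at hxq
      have hmem : x ∉ Set.Ioc (0:ℝ) q := fun h => absurd h.2 (not_le.2 hxq)
      rw [Set.indicator_of_notMem hmem, Set.Ioc_eq_empty (not_lt.2 hxq.le)]
      simp
  simp_rw [measureReal_def]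
  rw [setIntegral_congr_fun measurableSet_Ioi hstep, integral_indicator measurableSet_Ioc,
    Measure.restrict_restrict measurableSet_Ioc,
    Set.inter_eq_left.mpr Set.Ioc_subset_Ioi_self]

/-- Layer-cake computation for the Lorenz numerator. -/
lemma B_eq (hμ : MemM μ) {p : ℝ} (hp : p ∈ Set.Ico (0:ℝ) 1) :
    ∫ t in (0:ℝ)..p, quant μ t
      = ∫ x in Set.Ioc (0:ℝ) (quant μ p), (p - cdfR μ x) := by
  have := hμ.1
  set q := quant μ p with hq
  have hq0 : 0 ≤ q := quant_nonneg μ p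
  set Q' : ℝ → ℝ := fun t => quant μ (min t p) with hQ'
  have hQ'mono : Monotone Q' := by
    intro s t hst
    exact quant_mono hμ (min_le_min_right p hst) (lt_of_le_of_lt (min_le_right t p) hp.2)
  have hQ'meas : Measurable Q' := hQ'mono.measurable
  have hQ'nonneg : ∀ t, 0 ≤ Q' t := fun t => quant_nonneg μ _
  have hQ'le : ∀ t, Q' t ≤ q := by
    intro t
    have : min t p ≤ p := min_le_right t p
    have := quant_mono hμ this hp.2
    simpa [hq] using this
  have hvolIoc : (volume (Set.Ioc (0:ℝ) p)) ≠ ⊤ := by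
    rw [Real.volume_Ioc]; exact ENNReal.ofReal_ne_top
  have hintQ' : Integrable Q' (volume.restrict (Set.Ioc (0:ℝ) p)) := by
    refine Integrable.mono' (g := fun _ => q) ?_ hQ'meas.aestronglyMeasurable ?_
    · exact integrableOn_const hvolIoc
    · refine ae_of_all _ fun t => ?_
      rw [Real.norm_eq_abs, abs_of_nonneg (hQ'nonneg t)]
      exact hQ'le t
  have hQmeasIoc : Set.EqOn (quant μ) Q' (Set.Ioc 0 p) := by
    intro t ht
    simp only [hQ', min_eq_left ht.2]
  rw [intervalIntegral.integral_of_le hp.1,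
    setIntegral_congr_fun measurableSet_Ioc hQmeasIoc,
    hintQ'.integral_eq_integral_meas_lt (ae_of_all _ hQ'nonneg)]
  have hstep : ∀ x ∈ Set.Ioi (0:ℝ),
      ((volume.restrict (Set.Ioc (0:ℝ) p)) {t : ℝ | x < Q' t}).toReal
        = Set.indicator (Set.Ioc 0 q) (fun x => max (p - cdfR μ x) 0) x := by
    intro x hx
    have hx0 : (0:ℝ) < x := hx
    have hmeas : MeasurableSet {t : ℝ | x < Q' t} := hQ'meas measurableSet_Ioi
    rw [Measure.restrict_apply hmeas]
    have hinter : {t : ℝ | x < Q' t} ∩ Set.Ioc 0 p = Set.Ioc (cdfR μ x) p := by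
      ext t
      simp only [Set.mem_inter_iff, Set.mem_setOf_eq, Set.mem_Ioc]
      constructor
      · rintro ⟨h1, h2, h3⟩
        have ht1 : t < 1 := lt_of_le_of_lt h3 hp.2
        have hQt : Q' t = quant μ t := by simp [hQ', min_eq_left h3]
        rw [hQt] at h1
        have : ¬ (quant μ t ≤ x) := not_le.2 h1
        rw [quant_le_iff hμ ht1 hx0.le] at this
        exact ⟨not_le.1 this, h3⟩
      · rintro ⟨h1, h2⟩
        have ht0 : 0 < t := lt_of_le_of_lt (cdf_nonneg μ x) h1
        have ht1 : t < 1 := lt_of_le_of_lt h2 hp.2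
        have hQt : Q' t = quant μ t := by simp [hQ', min_eq_left h2]
        rw [hQt]
        refine ⟨?_, ht0, h2⟩
        have : ¬ (t ≤ cdfR μ x) := not_le.2 h1
        rw [← quant_le_iff hμ ht1 hx0.le] at this
        exact not_le.1 this
    rw [hinter, Real.volume_Ioc, ENNReal.toReal_ofReal']
    by_cases hxq : x ≤ q
    · rw [Set.indicator_of_mem (show x ∈ Set.Ioc (0:ℝ) q from ⟨hx0, hxq⟩)]
    · push_neg at hxq
      rw [Set.indicator_of_notMem (fun h => absurd h.2 (not_le.2 hxq))]
      have hFq : p ≤ cdfR μ q := cdf_quant_ge hμ hp.2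
      have : cdfR μ q ≤ cdfR μ x := cdf_mono hμ hxq.le
      have : p - cdfR μ x ≤ 0 := by linarith
      simp [max_eq_right this]
  simp_rw [measureReal_def]
  rw [setIntegral_congr_fun measurableSet_Ioi hstep, integral_indicator measurableSet_Ioc,
    Measure.restrict_restrict measurableSet_Ioc,
    Set.inter_eq_left.mpr Set.Ioc_subset_Ioi_self]
  -- now replace max (p - F x) 0 by p - F x a.e. on Ioc 0 q
  refine setIntegral_congr_ae measurableSet_Ioc ?_
  have hae : ∀ᵐ x : ℝ, x ≠ q := by
    refine ae_iff.2 ?_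
    have : {a : ℝ | ¬ a ≠ q} = {q} := by ext a; simp
    rw [this]
    exact measure_singleton q
  filter_upwards [hae] with x hxq hxmem
  have hxlt : x < q := lt_of_le_of_ne hxmem.2 hxq
  have : cdfR μ x < p := cdf_lt_of_lt_quant hμ hxmem.1.le hxlt
  exact max_eq_left (by linarith)

end PLaux

/-- For every `μ ∈ 𝐌` and `p ∈ [0,1)`,
`Λ_μ(p) − L_μ(p) = (Q_μ(p)/m_μ) · (F_μ(Q_μ(p)) − p)`. -/
theorem pseudoLorenz_sub_lorenz (μ : Measure ℝ) (hμ : MemM μ)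
    (p : ℝ) (hp : p ∈ Set.Ico (0:ℝ) 1) :
    pseudoLorenz μ p - lorenz μ p = quant μ p / mMean μ * (cdfR μ (quant μ p) - p) := by
  set q := quant μ p with hq
  have hq0 : 0 ≤ q := PLaux.quant_nonneg μ p
  rw [pseudoLorenz, if_neg hp.2.ne, lorenz, PLaux.A_eq hμ hp, PLaux.B_eq hμ hp]
  -- integrability of cdfR μ on Ioc 0 q
  have hvolIoc : (volume (Set.Ioc (0:ℝ) q)) ≠ ⊤ := by
    rw [Real.volume_Ioc]; exact ENNReal.ofReal_ne_top
  have hconst : ∀ c : ℝ, IntegrableOn (fun _ : ℝ => c) (Set.Ioc (0:ℝ) q) volume :=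
    fun c => integrableOn_const hvolIoc
  have hFint : IntegrableOn (cdfR μ) (Set.Ioc (0:ℝ) q) volume := by
    refine Integrable.mono' (hconst (cdfR μ q))
      ((PLaux.cdf_mono hμ).measurable.aestronglyMeasurable) ?_
    refine (ae_restrict_iff' measurableSet_Ioc).2 (ae_of_all _ fun x hx => ?_)
    rw [Real.norm_eq_abs, abs_of_nonneg (PLaux.cdf_nonneg μ x)]
    exact PLaux.cdf_mono hμ hx.2
  have h1 : IntegrableOn (fun x => cdfR μ q - cdfR μ x) (Set.Ioc (0:ℝ) q) volume :=
    (hconst _).sub hFint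
  have h2 : IntegrableOn (fun x => p - cdfR μ x) (Set.Ioc (0:ℝ) q) volume :=
    (hconst _).sub hFint
  have hdiff : (∫ x in Set.Ioc (0:ℝ) q, (cdfR μ q - cdfR μ x))
      - (∫ x in Set.Ioc (0:ℝ) q, (p - cdfR μ x)) = q * (cdfR μ q - p) := by
    rw [← integral_sub h1 h2]
    have : (fun x => (cdfR μ q - cdfR μ x) - (p - cdfR μ x)) = fun _ : ℝ => cdfR μ q - p := by
      funext x; ring
    rw [this, setIntegral_const, measureReal_def, Real.volume_Ioc, sub_zero, ENNReal.toReal_ofReal hq0,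
      smul_eq_mul]
  rw [div_sub_div_same, hdiff, div_mul_eq_mul_div]
end

section
/- For every μ ∈ 𝐌 and every p ∈ [0,1], one has L_μ(p) ≤ Λ_μ(p); moreover L_μ(p) = Λ_μ(p) holds if and only if at least one of the following is true: there exists x ∈ ℝ₊ with p = F_μ(x), or Q_μ(p) = 0, or p = 1. -/
open MeasureTheory Filter Topology

section Aux

open Set ProbabilityTheory

variable {μ : Measure ℝ} {p : ℝ}

theorem cdfR_eq_cdf (hμ : MemM μ) : cdfR μ = ⇑(ProbabilityTheory.cdf μ) := by
  have : IsProbabilityMeasure μ := hμ.1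
  funext x
  rw [ProbabilityTheory.cdf_eq_real, cdfR, measureReal_def]
  congr 1
  refine le_antisymm (measure_mono Icc_subset_Iic_self) ?_
  calc μ (Iic x) ≤ μ (Icc 0 x ∪ {y : ℝ | y < 0}) := by
        refine measure_mono fun y hy => ?_
        rcases le_or_gt 0 y with h | h
        · exact Or.inl ⟨h, hy⟩
        · exact Or.inr h
    _ ≤ μ (Icc 0 x) + μ {y : ℝ | y < 0} := measure_union_le _ _
    _ = μ (Icc 0 x) := by rw [hμ.2.1, add_zero]

theorem cdfR_nonneg' (x : ℝ) : 0 ≤ cdfR μ x := ENNReal.toReal_nonneg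

theorem cdfR_le_one (hμ : MemM μ) (x : ℝ) : cdfR μ x ≤ 1 := by
  rw [cdfR_eq_cdf hμ]; exact cdf_le_one μ x

theorem cdfR_mono (hμ : MemM μ) : Monotone (cdfR μ) := by
  rw [cdfR_eq_cdf hμ]; exact monotone_cdf μ

theorem ofReal_cdfR (hμ : MemM μ) (x : ℝ) : ENNReal.ofReal (cdfR μ x) = μ (Iic x) := by
  have : IsProbabilityMeasure μ := hμ.1
  rw [cdfR_eq_cdf hμ, ofReal_cdf]

theorem bddBelow_S : BddBelow {x : ℝ | 0 ≤ x ∧ p ≤ cdfR μ x} :=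
  ⟨0, fun _ hx => hx.1⟩

theorem S_nonempty (hμ : MemM μ) (hp1 : p < 1) :
    {x : ℝ | 0 ≤ x ∧ p ≤ cdfR μ x}.Nonempty := by
  have h2 : ∀ᶠ x in Filter.atTop, p ≤ ProbabilityTheory.cdf μ x :=
    (tendsto_cdf_atTop μ).eventually (eventually_ge_nhds hp1)
  obtain ⟨x, hx⟩ := (h2.and (Filter.eventually_ge_atTop (0:ℝ))).exists
  exact ⟨x, hx.2, by rw [cdfR_eq_cdf hμ]; exact hx.1⟩

theorem quant_nonneg' : 0 ≤ quant μ p :=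
  Real.sInf_nonneg fun _ hx => hx.1

theorem quant_le_of_mem {x : ℝ} (hx0 : 0 ≤ x) (hx : p ≤ cdfR μ x) : quant μ p ≤ x :=
  csInf_le bddBelow_S ⟨hx0, hx⟩

theorem le_cdfR_quant (hμ : MemM μ) (hp1 : p < 1) : p ≤ cdfR μ (quant μ p) := by
  rcases le_or_gt p 0 with h | h
  · exact h.trans (cdfR_nonneg' _)
  by_contra hlt
  push_neg at hlt
  set q := quant μ p with hq
  have hrc : ContinuousWithinAt (cdfR μ) (Ici q) q := by
    rw [cdfR_eq_cdf hμ]; exact (ProbabilityTheory.cdf μ).right_continuous q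
  have hmem : (cdfR μ) ⁻¹' (Iio p) ∈ 𝓝[≥] q := hrc (Iio_mem_nhds hlt)
  obtain ⟨u, hu, hsub⟩ := mem_nhdsGE_iff_exists_Ico_subset.mp hmem
  have hδ : (0:ℝ) < u - q := by simpa using sub_pos.mpr (mem_Ioi.mp hu)
  obtain ⟨y, hyS, hy⟩ := Real.lt_sInf_add_pos (S_nonempty hμ hp1) hδ
  have hqy : q ≤ y := csInf_le bddBelow_S hyS
  have hylt : y < u := by
    have h2 : y < q + (u - q) := hy
    linarith
  have := hsub ⟨hqy, hylt⟩
  exact absurd hyS.2 (not_le.mpr this)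

theorem quant_le_iff (hμ : MemM μ) {t a : ℝ} (ht1 : t < 1) (ha : 0 ≤ a) :
    quant μ t ≤ a ↔ t ≤ cdfR μ a :=
  ⟨fun h => (le_cdfR_quant hμ ht1).trans (cdfR_mono hμ h),
   fun h => quant_le_of_mem ha h⟩

theorem quant_monoOn (hμ : MemM μ) : MonotoneOn (quant μ) (Ioo (0:ℝ) 1) :=
  fun _ _ q hq hpq =>
    quant_le_of_mem quant_nonneg' (hpq.trans (le_cdfR_quant hμ hq.2))

theorem quant_aemeas (hμ : MemM μ) :
    AEMeasurable (quant μ) (volume.restrict (Ioo (0:ℝ) 1)) :=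
  aemeasurable_restrict_of_monotoneOn measurableSet_Ioo (quant_monoOn hμ)

theorem map_quant (hμ : MemM μ) :
    Measure.map (quant μ) (volume.restrict (Ioo (0:ℝ) 1)) = μ := by
  have hprob : IsProbabilityMeasure μ := hμ.1
  have haem := quant_aemeas hμ
  have hfin : IsFiniteMeasure (Measure.map (quant μ) (volume.restrict (Ioo (0:ℝ) 1))) := by
    constructor
    rw [Measure.map_apply_of_aemeasurable haem MeasurableSet.univ]
    simp [Real.volume_Ioo]
  refine Measure.ext_of_Iic _ μ fun a => ?_
  rw [Measure.map_apply_of_aemeasurable haem measurableSet_Iic,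
      Measure.restrict_apply' measurableSet_Ioo]
  rcases lt_or_ge a 0 with ha | ha
  · have h1 : quant μ ⁻¹' Iic a ∩ Ioo (0:ℝ) 1 = ∅ := by
      ext t
      simp only [mem_inter_iff, mem_preimage, mem_Iic, mem_Ioo, mem_empty_iff_false, iff_false,
        not_and]
      intro h
      exact absurd (lt_of_le_of_lt h ha) (not_lt.mpr quant_nonneg')
    have h2 : μ (Iic a) = 0 :=
      measure_mono_null (fun y (hy : y ≤ a) => show y < 0 from lt_of_le_of_lt hy ha) hμ.2.1
    rw [h1, h2, measure_empty]
  · have hc0 : 0 ≤ cdfR μ a := cdfR_nonneg' _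
    have hc1 : cdfR μ a ≤ 1 := cdfR_le_one hμ _
    have hset : quant μ ⁻¹' Iic a ∩ Ioo (0:ℝ) 1 = Iic (cdfR μ a) ∩ Ioo (0:ℝ) 1 := by
      ext t
      simp only [mem_inter_iff, mem_preimage, mem_Iic, mem_Ioo]
      constructor
      · rintro ⟨h1, h2⟩
        exact ⟨(quant_le_iff hμ h2.2 ha).mp h1, h2⟩
      · rintro ⟨h1, h2⟩
        exact ⟨(quant_le_iff hμ h2.2 ha).mpr h1, h2⟩
    rw [hset, ← ofReal_cdfR hμ a]
    refine le_antisymm ?_ ?_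
    · calc volume (Iic (cdfR μ a) ∩ Ioo (0:ℝ) 1) ≤ volume (Ioc (0:ℝ) (cdfR μ a)) :=
            measure_mono fun t ht => ⟨ht.2.1, ht.1⟩
        _ = ENNReal.ofReal (cdfR μ a) := by rw [Real.volume_Ioc, sub_zero]
    · calc ENNReal.ofReal (cdfR μ a) = volume (Ioo (0:ℝ) (cdfR μ a)) := by
            rw [Real.volume_Ioo, sub_zero]
        _ ≤ volume (Iic (cdfR μ a) ∩ Ioo (0:ℝ) 1) :=
            measure_mono fun t ht => ⟨ht.2.le, ht.1, lt_of_lt_of_le ht.2 hc1⟩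

theorem aesm_id (hμ : MemM μ) :
    AEStronglyMeasurable (fun x : ℝ => x)
      (Measure.map (quant μ) (volume.restrict (Ioo (0:ℝ) 1))) := by
  rw [map_quant hμ]; exact aestronglyMeasurable_id

theorem mean_eq (hμ : MemM μ) : ∫ t in Ioo (0:ℝ) 1, quant μ t = mMean μ := by
  have h := integral_map (quant_aemeas hμ) (aesm_id hμ)
  rw [map_quant hμ] at h
  exact h.symm

theorem quant_integrableOn (hμ : MemM μ) :
    IntegrableOn (quant μ) (Ioo (0:ℝ) 1) volume := by
  have h : Integrable (fun x : ℝ => x) μ := hμ.2.2.1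
  rw [← map_quant hμ, integrable_map_measure (aesm_id hμ) (quant_aemeas hμ)] at h
  exact h

theorem quant_integrableOn' (hμ : MemM μ) :
    IntegrableOn (quant μ) (Ioc (0:ℝ) 1) volume := by
  have h := quant_integrableOn hμ
  rwa [IntegrableOn, Measure.restrict_congr_set Ioo_ae_eq_Ioc] at h

theorem quant_II (hμ : MemM μ) {a b : ℝ} (h1 : 0 ≤ a) (h2 : a ≤ b) (h3 : b ≤ 1) :
    IntervalIntegrable (quant μ) volume a b := by
  rw [intervalIntegrable_iff_integrableOn_Ioc_of_le h2]
  exact (quant_integrableOn' hμ).mono_set (Ioc_subset_Ioc h1 h3)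

theorem lorenz_one (hμ : MemM μ) : lorenz μ 1 = 1 := by
  have hm : mMean μ ≠ 0 := hμ.2.2.2.ne'
  rw [lorenz, intervalIntegral.integral_of_le zero_le_one,
    setIntegral_congr_set (Ioo_ae_eq_Ioc (μ := volume) (a := (0:ℝ)) (b := 1)).symm,
    mean_eq hμ, div_self hm]

theorem pl_int (hμ : MemM μ) (hp0 : 0 ≤ p) (hp1 : p < 1) :
    ∫ u in Icc (0:ℝ) (quant μ p), u ∂μ
      = ∫ t in (0:ℝ)..(cdfR μ (quant μ p)), quant μ t := by
  have hc0 : 0 ≤ cdfR μ (quant μ p) := cdfR_nonneg' _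
  have hc1 : cdfR μ (quant μ p) ≤ 1 := cdfR_le_one hμ _
  have hstep : ∀ b : ℝ, ∫ u in Icc (0:ℝ) b, u ∂μ
      = ∫ x in quant μ ⁻¹' Icc 0 b ∩ Ioo (0:ℝ) 1, quant μ x := by
    intro b
    conv_lhs => rw [← map_quant hμ]
    rw [setIntegral_map measurableSet_Icc (aesm_id hμ) (quant_aemeas hμ),
        Measure.restrict_restrict' measurableSet_Ioo]
  rw [intervalIntegral.integral_of_le hc0, hstep]
  have hset : quant μ ⁻¹' Icc 0 (quant μ p) ∩ Ioo (0:ℝ) 1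
      = Iic (cdfR μ (quant μ p)) ∩ Ioo (0:ℝ) 1 := by
    ext t
    simp only [mem_inter_iff, mem_preimage, mem_Icc, mem_Ioo, mem_Iic]
    constructor
    · rintro ⟨⟨-, h2⟩, ht⟩
      exact ⟨(quant_le_iff hμ ht.2 quant_nonneg').mp h2, ht⟩
    · rintro ⟨h1, ht⟩
      exact ⟨⟨quant_nonneg', (quant_le_iff hμ ht.2 quant_nonneg').mpr h1⟩, ht⟩
  rw [hset]
  refine setIntegral_congr_set (ae_eq_set.mpr ⟨?_, ?_⟩)
  · have : (Iic (cdfR μ (quant μ p)) ∩ Ioo (0:ℝ) 1) \ Ioc 0 (cdfR μ (quant μ p)) = ∅ := by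
      ext t
      simp only [mem_diff, mem_inter_iff, mem_Iic, mem_Ioo, mem_Ioc, mem_empty_iff_false,
        iff_false]
      rintro ⟨⟨h1, h2, h3⟩, h4⟩
      exact h4 ⟨h2, h1⟩
    rw [this, measure_empty]
  · refine measure_mono_null (fun t ht => ?_) (measure_singleton (1:ℝ))
    rcases ht with ⟨⟨ht0, htc⟩, hnot⟩
    simp only [mem_inter_iff, mem_Iic, mem_Ioo, not_and] at hnot
    have h1 : ¬ (0 < t ∧ t < 1) := fun h => hnot htc h.1 h.2
    have : (1:ℝ) ≤ t := by
      by_contra h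
      exact h1 ⟨ht0, not_le.mp h⟩
    have : t = 1 := le_antisymm (htc.trans hc1) this
    simp [this]

theorem quant_const_on (hμ : MemM μ) (hp0 : 0 ≤ p) (hp1 : p < 1) {t : ℝ}
    (ht : t ∈ Ioo p (cdfR μ (quant μ p))) : quant μ t = quant μ p := by
  have hc1 : cdfR μ (quant μ p) ≤ 1 := cdfR_le_one hμ _
  have ht1 : t < 1 := lt_of_lt_of_le ht.2 hc1
  refine le_antisymm ?_ ?_
  · exact quant_le_of_mem quant_nonneg' ht.2.le
  · exact quant_le_of_mem quant_nonneg' (ht.1.le.trans (le_cdfR_quant hμ ht1))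

theorem gap_eq (hμ : MemM μ) (hp0 : 0 ≤ p) (hp1 : p < 1) :
    ∫ t in p..(cdfR μ (quant μ p)), quant μ t
      = quant μ p * (cdfR μ (quant μ p) - p) := by
  have hpc : p ≤ cdfR μ (quant μ p) := le_cdfR_quant hμ hp1
  rw [intervalIntegral.integral_of_le hpc,
    setIntegral_congr_set (Ioo_ae_eq_Ioc (μ := volume) (a := p) (b := cdfR μ (quant μ p))).symm,
    setIntegral_congr_fun measurableSet_Ioo (fun t ht => quant_const_on hμ hp0 hp1 ht)]
  rw [setIntegral_const, Real.volume_real_Ioo_of_le hpc, smul_eq_mul,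
    mul_comm]

theorem key_eq (hμ : MemM μ) (hp0 : 0 ≤ p) (hp1 : p < 1) :
    pseudoLorenz μ p
      = lorenz μ p + quant μ p * (cdfR μ (quant μ p) - p) / mMean μ := by
  have hpc : p ≤ cdfR μ (quant μ p) := le_cdfR_quant hμ hp1
  have hc1 : cdfR μ (quant μ p) ≤ 1 := cdfR_le_one hμ _
  rw [pseudoLorenz, if_neg hp1.ne, pl_int hμ hp0 hp1, lorenz,
    ← intervalIntegral.integral_add_adjacent_intervals
      (quant_II hμ le_rfl hp0 hp1.le) (quant_II hμ hp0 hpc hc1),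
    gap_eq hμ hp0 hp1, add_div]

end Aux

/-- For every `μ ∈ 𝐌` and `p ∈ [0,1]`, `L_μ(p) ≤ Λ_μ(p)`, with equality
iff `p` is in the range of `F_μ` on `ℝ₊`, or `Q_μ(p) = 0`, or `p = 1`. -/
theorem lorenz_le_pseudoLorenz_and_eq_iff (μ : Measure ℝ) (hμ : MemM μ)
    (p : ℝ) (hp : p ∈ Set.Icc (0:ℝ) 1) :
    lorenz μ p ≤ pseudoLorenz μ p ∧
      (lorenz μ p = pseudoLorenz μ p ↔
        (∃ x : ℝ, 0 ≤ x ∧ p = cdfR μ x) ∨ quant μ p = 0 ∨ p = 1) := by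
  obtain ⟨hp0, hp1⟩ := hp
  have hm : 0 < mMean μ := hμ.2.2.2
  by_cases hP : p = 1
  · subst hP
    refine ⟨le_of_eq ?_, ?_⟩
    · rw [lorenz_one hμ, pseudoLorenz, if_pos rfl]
    · simp only [iff_true, or_true]
      rw [lorenz_one hμ, pseudoLorenz, if_pos rfl]
  · have hp1' : p < 1 := lt_of_le_of_ne hp1 hP
    have hpc : p ≤ cdfR μ (quant μ p) := le_cdfR_quant hμ hp1'
    have hkey := key_eq hμ hp0 hp1'
    constructor
    · rw [hkey]
      have : 0 ≤ quant μ p * (cdfR μ (quant μ p) - p) / mMean μ :=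
        div_nonneg (mul_nonneg quant_nonneg' (by linarith)) hm.le
      linarith
    · rw [hkey, left_eq_add, div_eq_zero_iff, or_iff_left hm.ne', mul_eq_zero,
        sub_eq_zero]
      constructor
      · rintro (h0 | hcp)
        · exact Or.inr (Or.inl h0)
        · exact Or.inl ⟨quant μ p, quant_nonneg', hcp.symm⟩
      · rintro (⟨x, hx0, hpx⟩ | h0 | h1)
        · refine Or.inr ?_
          have hq : quant μ p ≤ x := quant_le_of_mem hx0 hpx.le
          exact le_antisymm ((cdfR_mono hμ hq).trans hpx.symm.le) hpc
        · exact Or.inl h0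
        · exact absurd h1 hP
end

section
/- Let a < b be real numbers and let f : ℝ → ℝ be convex on the open interval (a,b). Then the left-derivative function x ↦ ∂₋f(x) (which exists at every point of (a,b)) is left-continuous on (a,b): for every z ∈ (a,b), ∂₋f(x) tends to ∂₋f(z) as x tends to z from the left. -/
open MeasureTheory Filter Topology

open Set Filter Topology in
private lemma convex_hasLeftDerivAux (a b : ℝ) (f : ℝ → ℝ)
    (hf : ConvexOn ℝ (Set.Ioo a b) f) {z : ℝ} (hz : z ∈ Set.Ioo a b) :
    HasDerivWithinAt f (sSup (slope f z '' Set.Ioo a z)) (Set.Iio z) z := by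
  obtain ⟨haz, hzb⟩ := hz
  have mono : MonotoneOn (slope f z) (Set.Ioo a b \ {z}) := hf.slope_mono ⟨haz, hzb⟩
  have mono' : MonotoneOn (slope f z) (Set.Ioo a z) := by
    apply mono.mono
    rintro x ⟨h1, h2⟩
    exact ⟨⟨h1, h2.trans hzb⟩, h2.ne⟩
  have hne : (Set.Ioo a z).Nonempty := Set.nonempty_Ioo.2 haz
  set w := (z + b) / 2 with hw
  have hw1 : z < w := by rw [hw]; linarith
  have hw2 : w < b := by rw [hw]; linarith
  have hbdd : BddAbove (slope f z '' Set.Ioo a z) := by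
    refine ⟨slope f z w, ?_⟩
    rintro _ ⟨y, hy, rfl⟩
    exact mono ⟨⟨hy.1, hy.2.trans hzb⟩, hy.2.ne⟩ ⟨⟨haz.trans hw1, hw2⟩, hw1.ne'⟩
      (hy.2.le.trans hw1.le)
  exact (hasDerivWithinAt_iff_tendsto_slope' notMem_Iio_self).mpr
    (MonotoneOn.tendsto_nhdsWithin_Ioo_left hne mono' hbdd)

/-- The left derivative of a function convex on an open interval `(a,b)`
exists at every point of `(a,b)` and is left-continuous there. -/
theorem leftDeriv_leftContinuous_of_convexOn (a b : ℝ) (hab : a < b) (f : ℝ → ℝ)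
    (hf : ConvexOn ℝ (Set.Ioo a b) f) :
    (∀ z ∈ Set.Ioo a b, DifferentiableWithinAt ℝ f (Set.Iio z) z) ∧
    ∀ z ∈ Set.Ioo a b,
      Tendsto (fun x => derivWithin f (Set.Iio x) x) (𝓝[<] z)
        (𝓝 (derivWithin f (Set.Iio z) z)) := by
  have key : ∀ z ∈ Set.Ioo a b,
      HasDerivWithinAt f (sSup (slope f z '' Set.Ioo a z)) (Set.Iio z) z :=
    fun z hz => convex_hasLeftDerivAux a b f hf hz
  have hdiff : ∀ z ∈ Set.Ioo a b, DifferentiableWithinAt ℝ f (Set.Iio z) z :=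
    fun z hz => (key z hz).differentiableWithinAt
  refine ⟨hdiff, fun z hz => ?_⟩
  set g := fun x => derivWithin f (Set.Iio x) x with hg
  have hgz : ∀ x ∈ Set.Ioo a b, g x = sSup (slope f x '' Set.Ioo a x) :=
    fun x hx => (key x hx).derivWithin (uniqueDiffWithinAt_Iio x)
  have hmono : MonotoneOn g (Set.Ioo a b) := by
    intro x hx y hy hxy
    rcases eq_or_lt_of_le hxy with rfl | hxy
    · exact le_rfl
    have h1 : g x ≤ slope f x y := by
      rw [hgz x hx]
      refine csSup_le ((Set.nonempty_Ioo.2 hx.1).image _) ?_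
      rintro _ ⟨u, hu, rfl⟩
      exact (hf.slope_mono hx) ⟨⟨hu.1, hu.2.trans hx.2⟩, hu.2.ne⟩
        ⟨hy, hxy.ne'⟩ (hu.2.le.trans hxy.le)
    exact h1.trans (hf.slope_le_leftDeriv hx hy hxy (hdiff y hy))
  have hne : (Set.Ioo a z).Nonempty := Set.nonempty_Ioo.2 hz.1
  have hsub : Set.Ioo a z ⊆ Set.Ioo a b := Set.Ioo_subset_Ioo le_rfl hz.2.le
  have hbdd : BddAbove (g '' Set.Ioo a z) := by
    refine ⟨g z, ?_⟩
    rintro _ ⟨x, hx, rfl⟩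
    exact hmono (hsub hx) hz hx.2.le
  have ht : Tendsto g (𝓝[<] z) (𝓝 (sSup (g '' Set.Ioo a z))) :=
    MonotoneOn.tendsto_nhdsWithin_Ioo_left hne (hmono.mono hsub) hbdd
  have hcont : ContinuousAt f z :=
    (hf.continuousOn isOpen_Ioo z hz).continuousAt (isOpen_Ioo.mem_nhds hz)
  have hLle : sSup (g '' Set.Ioo a z) ≤ g z := by
    refine csSup_le (hne.image _) ?_
    rintro _ ⟨x, hx, rfl⟩
    exact hmono (hsub hx) hz hx.2.le
  have hgeL : g z ≤ sSup (g '' Set.Ioo a z) := by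
    rw [hgz z hz]
    refine csSup_le (hne.image _) ?_
    rintro _ ⟨y, hy, rfl⟩
    -- slope f z y = slope f y z ≤ L
    have hslope_cont : Tendsto (fun x => slope f y x) (𝓝[<] z) (𝓝 (slope f y z)) := by
      apply Tendsto.mono_left _ nhdsWithin_le_nhds
      have : ContinuousAt (fun x => slope f y x) z := by
        simp only [slope_def_field]
        exact ((hcont.sub continuousAt_const).div
          (continuousAt_id.sub continuousAt_const) (by simp [sub_ne_zero, hy.2.ne']))
      exact this
    have hev : ∀ᶠ x in 𝓝[<] z, slope f y x ≤ g x := by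
      filter_upwards [Ioo_mem_nhdsLT hy.2] with x hx
      have hxab : x ∈ Set.Ioo a b := ⟨hy.1.trans hx.1, hx.2.trans hz.2⟩
      exact hf.slope_le_leftDeriv (hsub hy) hxab hx.1 (hdiff x hxab)
    rw [slope_comm]
    exact le_of_tendsto_of_tendsto hslope_cont ht hev
  have hL : sSup (g '' Set.Ioo a z) = g z := le_antisymm hLle hgeL
  show Tendsto g (𝓝[<] z) (𝓝 (g z))
  rw [← hL]
  exact ht
end

section
/- For every μ ∈ 𝐌, the Hoover coefficient equals the maximal vertical distance between the diagonal and the Lorenz curve: H(μ) = sup_{p ∈ [0,1]} (p − L_μ(p)), and this supremum is attained (in particular it is attained at p = F_μ(m_μ)). -/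
open MeasureTheory Filter Topology

section Aux
open MeasureTheory Filter Topology Set ENNReal

namespace HAux

variable {μ : Measure ℝ} [IsProbabilityMeasure μ]

lemma cdfR_mono : Monotone (cdfR μ) := fun x y hxy =>
  ENNReal.toReal_mono (measure_ne_top μ _) (measure_mono (Icc_subset_Icc_right hxy))

lemma cdfR_nonneg (x : ℝ) : 0 ≤ cdfR μ x := ENNReal.toReal_nonneg

lemma ofReal_cdfR (x : ℝ) : ENNReal.ofReal (cdfR μ x) = μ (Icc 0 x) :=
  ENNReal.ofReal_toReal (measure_ne_top μ _)

lemma cdfR_le_one (x : ℝ) : cdfR μ x ≤ 1 := by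
  have : μ (Icc 0 x) ≤ 1 := prob_le_one
  simpa [cdfR] using ENNReal.toReal_mono (by simp) this

lemma cdfR_measurable : Measurable (cdfR μ) := cdfR_mono.measurable

lemma meas_Ici (hneg : μ (Iio 0) = 0) : μ (Ici 0) = 1 := by
  have h : (1:ℝ≥0∞) = μ (Iio 0 ∪ Ici 0) := by
    rw [Iio_union_Ici, measure_univ]
  have := measure_union_le (μ := μ) (Iio 0) (Ici 0)
  rw [← h, hneg, zero_add] at this
  exact le_antisymm prob_le_one this

lemma compl_split (hneg : μ (Iio 0) = 0) {x : ℝ} (hx : 0 ≤ x) :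
    μ (Icc 0 x) + μ (Ioi x) = 1 := by
  rw [← measure_union (by simp [disjoint_left]) measurableSet_Ioi]
  rw [Icc_union_Ioi_eq_Ici hx, meas_Ici hneg]

lemma meas_Ioi_eq (hneg : μ (Iio 0) = 0) {x : ℝ} (hx : 0 ≤ x) :
    μ (Ioi x) = ENNReal.ofReal (1 - cdfR μ x) := by
  have h := compl_split hneg hx
  have : μ (Ioi x) = 1 - μ (Icc 0 x) :=
    ENNReal.eq_sub_of_add_eq (measure_ne_top μ _) (by rw [add_comm]; exact h)
  rw [this, ← ofReal_cdfR, ← ENNReal.ofReal_one, ← ENNReal.ofReal_sub _ (cdfR_nonneg x)]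

lemma le_cdfR_of_forall {x t : ℝ} (hx : 0 ≤ x) (h : ∀ y, x < y → t ≤ cdfR μ y) :
    t ≤ cdfR μ x := by
  have hanti : Antitone (fun n : ℕ => Icc (0:ℝ) (x + 1/(n+1))) := by
    intro a b hab
    apply Icc_subset_Icc_right
    have hab' : (a:ℝ) ≤ b := Nat.cast_le.mpr hab
    gcongr
  have hiinter : ⋂ n : ℕ, Icc (0:ℝ) (x + 1/(n+1)) = Icc 0 x := by
    ext y
    simp only [mem_iInter, mem_Icc]
    constructor
    · rintro h1
      refine ⟨(h1 0).1, ?_⟩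
      have : ∀ ε > (0:ℝ), y ≤ x + ε := by
        intro ε hε
        obtain ⟨n, hn⟩ := exists_nat_one_div_lt hε
        exact le_trans (h1 n).2 (by linarith [hn.le])
      exact le_of_forall_pos_le_add this
    · intro h1 n
      constructor
      · exact h1.1
      · have : (0:ℝ) < 1/(n+1) := by positivity
        linarith [h1.2]
  have hlim : Tendsto (fun n : ℕ => μ (Icc (0:ℝ) (x + 1/(n+1)))) atTop
      (𝓝 (μ (Icc 0 x))) := by
    have := tendsto_measure_iInter_atTop (μ := μ)
      (fun n => (measurableSet_Icc).nullMeasurableSet) hanti ⟨0, measure_ne_top μ _⟩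
    rwa [hiinter] at this
  have hlim2 : Tendsto (fun n : ℕ => cdfR μ (x + 1/(n+1))) atTop (𝓝 (cdfR μ x)) :=
    (ENNReal.tendsto_toReal (measure_ne_top μ _)).comp hlim
  refine ge_of_tendsto hlim2 (Eventually.of_forall fun n => ?_)
  exact h _ (lt_add_of_pos_right x (by positivity))

lemma exists_cdfR_ge (hneg : μ (Iio 0) = 0) {t : ℝ} (ht : t < 1) :
    ∃ x : ℝ, 0 ≤ x ∧ t ≤ cdfR μ x := by
  have hmono : Monotone (fun n : ℕ => Icc (0:ℝ) n) := by
    intro a b hab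
    exact Icc_subset_Icc_right (by exact_mod_cast hab)
  have hunion : ⋃ n : ℕ, Icc (0:ℝ) n = Ici 0 := by
    ext y
    simp only [mem_iUnion, mem_Icc, mem_Ici]
    constructor
    · rintro ⟨n, hn⟩; exact hn.1
    · intro hy
      obtain ⟨n, hn⟩ := exists_nat_ge y
      exact ⟨n, hy, hn⟩
  have hlim : Tendsto (fun n : ℕ => μ (Icc (0:ℝ) n)) atTop (𝓝 (1 : ℝ≥0∞)) := by
    have := tendsto_measure_iUnion_atTop (μ := μ) hmono
    rwa [hunion, meas_Ici hneg] at this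
  have hlim2 : Tendsto (fun n : ℕ => cdfR μ (n:ℝ)) atTop (𝓝 (1:ℝ)) := by
    have := (ENNReal.tendsto_toReal (by simp)).comp hlim
    exact this
  have := hlim2.eventually (eventually_gt_nhds ht)
  obtain ⟨n, hn⟩ := this.exists
  exact ⟨n, Nat.cast_nonneg n, hn.le⟩

lemma quant_nonneg (p : ℝ) : 0 ≤ quant μ p := Real.sInf_nonneg fun x hx => hx.1

lemma quant_le_iff (hneg : μ (Iio 0) = 0) {x t : ℝ} (hx : 0 ≤ x) (ht1 : t < 1) :
    quant μ t ≤ x ↔ t ≤ cdfR μ x := by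
  constructor
  · intro h
    apply le_cdfR_of_forall hx
    intro y hy
    obtain ⟨s, hs, hsy⟩ := exists_lt_of_csInf_lt
      (by obtain ⟨z, hz⟩ := exists_cdfR_ge hneg ht1; exact ⟨z, hz⟩)
      (lt_of_le_of_lt h hy)
    exact le_trans hs.2 (cdfR_mono hsy.le)
  · intro h
    exact csInf_le ⟨0, fun y hy => hy.1⟩ ⟨hx, h⟩

lemma quant_monotoneOn (hneg : μ (Iio 0) = 0) : MonotoneOn (quant μ) (Ioo 0 1) := by
  intro t ht t' ht' htt'
  apply csInf_le_csInf ⟨0, fun y hy => hy.1⟩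
  · obtain ⟨z, hz⟩ := exists_cdfR_ge hneg ht'.2; exact ⟨z, hz⟩
  · intro x hx
    exact ⟨hx.1, le_trans htt' hx.2⟩

end HAux

namespace Chunk2

variable {μ : Measure ℝ} [IsProbabilityMeasure μ]
open HAux

lemma ae_id_nonneg (hneg : μ (Iio 0) = 0) : 0 ≤ᵐ[μ] (id : ℝ → ℝ) := by
  rw [Filter.EventuallyLE, ae_iff]
  simpa [not_le, Iio] using hneg

lemma mean_lintegral (hneg : μ (Iio 0) = 0) (hint : Integrable id μ) :
    ∫⁻ x in Ioi 0, μ (Ioi x) = ENNReal.ofReal (mMean μ) := by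
  calc ∫⁻ x in Ioi 0, μ (Ioi x) = ∫⁻ t in Ioi 0, μ {a | t < id a} := rfl
    _ = ∫⁻ ω, ENNReal.ofReal (id ω) ∂μ :=
        (lintegral_eq_lintegral_meas_lt μ (ae_id_nonneg hneg)
          measurable_id.aemeasurable).symm
    _ = ENNReal.ofReal (∫ ω, id ω ∂μ) :=
        (ofReal_integral_eq_lintegral_ofReal hint (ae_id_nonneg hneg)).symm
    _ = ENNReal.ofReal (mMean μ) := rfl

lemma lorenz_lintegral (hneg : μ (Iio 0) = 0) {p : ℝ} (hp1 : p ≤ 1) :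
    ∫⁻ t in Ioc 0 p, ENNReal.ofReal (quant μ t)
      = ∫⁻ x in Ioi 0, ENNReal.ofReal (p - cdfR μ x) := by
  set k : ℝ → ℝ → ℝ≥0∞ := fun t x => if cdfR μ x < t then 1 else 0 with hk
  have hkm : Measurable (Function.uncurry k) := by
    apply Measurable.ite _ measurable_const measurable_const
    exact measurableSet_lt (cdfR_measurable.comp measurable_snd) measurable_fst
  have hswap := lintegral_lintegral_swap (μ := volume.restrict (Ioc 0 p))
      (ν := volume.restrict (Ioi 0)) hkm.aemeasurable
  have hone : ∀ᵐ t : ℝ ∂(volume.restrict (Ioc 0 p)), t ≠ 1 := by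
    apply ae_restrict_of_ae
    rw [ae_iff]
    simpa using (Real.volume_singleton (a := 1))
  have hleft : ∫⁻ t in Ioc 0 p, ∫⁻ x in Ioi 0, k t x
      = ∫⁻ t in Ioc 0 p, ENNReal.ofReal (quant μ t) := by
    apply lintegral_congr_ae
    filter_upwards [ae_restrict_mem measurableSet_Ioc, hone] with t ht htne
    have ht1 : t < 1 := lt_of_le_of_ne (ht.2.trans hp1) htne
    have hsmeas : MeasurableSet {x : ℝ | cdfR μ x < t} :=
      measurableSet_lt cdfR_measurable measurable_const
    have h1 : (fun x => k t x) = Set.indicator {x : ℝ | cdfR μ x < t} 1 := by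
      ext x; simp [hk, Set.indicator_apply]
    rw [h1, lintegral_indicator_one hsmeas, Measure.restrict_apply hsmeas]
    have hseteq : {x : ℝ | cdfR μ x < t} ∩ Ioi 0 = Ioo 0 (quant μ t) := by
      ext x
      simp only [mem_inter_iff, mem_setOf_eq, mem_Ioi, mem_Ioo]
      constructor
      · rintro ⟨h1, h2⟩
        refine ⟨h2, ?_⟩
        by_contra hcon
        push_neg at hcon
        exact absurd ((quant_le_iff hneg h2.le ht1).mp hcon) (not_le.mpr h1)
      · rintro ⟨h1, h2⟩
        refine ⟨?_, h1⟩
        by_contra hcon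
        push_neg at hcon
        exact absurd ((quant_le_iff hneg h1.le ht1).mpr hcon) (not_le.mpr h2)
    rw [hseteq, Real.volume_Ioo, sub_zero]
  have hright : ∫⁻ x in Ioi 0, ∫⁻ t in Ioc 0 p, k t x
      = ∫⁻ x in Ioi 0, ENNReal.ofReal (p - cdfR μ x) := by
    apply lintegral_congr_ae
    filter_upwards [ae_restrict_mem measurableSet_Ioi] with x hx
    have hsmeas : MeasurableSet {t : ℝ | cdfR μ x < t} := measurableSet_lt measurable_const measurable_id
    have h1 : (fun t => k t x) = Set.indicator {t : ℝ | cdfR μ x < t} 1 := by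
      ext t; simp [hk, Set.indicator_apply]
    rw [h1, lintegral_indicator_one hsmeas, Measure.restrict_apply hsmeas]
    have hseteq : {t : ℝ | cdfR μ x < t} ∩ Ioc 0 p = Ioc (cdfR μ x) p := by
      ext t
      simp only [mem_inter_iff, mem_setOf_eq, mem_Ioc]
      constructor
      · rintro ⟨h1, h2⟩; exact ⟨h1, h2.2⟩
      · rintro ⟨h1, h2⟩; exact ⟨h1, lt_of_le_of_lt (cdfR_nonneg x) h1, h2⟩
    rw [hseteq, Real.volume_Ioc]
  rw [← hleft, hswap, hright]

lemma quant_aemeasurable (hneg : μ (Iio 0) = 0) {p : ℝ} (hp1 : p ≤ 1) :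
    AEMeasurable (quant μ) (volume.restrict (Ioc 0 p)) := by
  have h1 : AEMeasurable (quant μ) (volume.restrict (Ioo 0 1)) :=
    aemeasurable_restrict_of_monotoneOn measurableSet_Ioo (quant_monotoneOn hneg)
  apply h1.mono_measure
  rw [Measure.le_iff]
  intro s hs
  rw [Measure.restrict_apply hs, Measure.restrict_apply hs]
  have hsub : s ∩ Ioc 0 p ⊆ (s ∩ Ioo 0 1) ∪ {1} := by
    rintro x ⟨hxs, hx0, hxp⟩
    rcases lt_or_eq_of_le (hxp.trans hp1) with h | h
    · exact Or.inl ⟨hxs, hx0, h⟩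
    · exact Or.inr (by simp [h])
  calc volume (s ∩ Ioc 0 p) ≤ volume ((s ∩ Ioo 0 1) ∪ {1}) := measure_mono hsub
    _ ≤ volume (s ∩ Ioo 0 1) + volume {1} := measure_union_le _ _
    _ = volume (s ∩ Ioo 0 1) := by simp

lemma meas_Ioi_measurable : Measurable (fun x : ℝ => μ (Ioi x)) :=
  Antitone.measurable (fun x y hxy => measure_mono (Ioi_subset_Ioi hxy))

lemma lorenz_lint_le (hneg : μ (Iio 0) = 0) (hint : Integrable id μ) {p : ℝ} (hp1 : p ≤ 1) :
    ∫⁻ x in Ioi 0, ENNReal.ofReal (p - cdfR μ x) ≤ ENNReal.ofReal (mMean μ) := by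
  rw [← mean_lintegral hneg hint]
  apply setLIntegral_mono meas_Ioi_measurable
  intro x hx
  rw [meas_Ioi_eq hneg (le_of_lt hx)]
  exact ENNReal.ofReal_le_ofReal (by linarith [cdfR_nonneg (μ := μ) x])

lemma quant_integrableOn (hneg : μ (Iio 0) = 0) (hint : Integrable id μ) {p : ℝ}
    (hp1 : p ≤ 1) : IntegrableOn (quant μ) (Ioc 0 p) := by
  constructor
  · exact (quant_aemeasurable hneg hp1).aestronglyMeasurable
  · rw [hasFiniteIntegral_iff_ofReal (Eventually.of_forall fun t => quant_nonneg t)]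
    rw [lorenz_lintegral hneg hp1]
    exact lt_of_le_of_lt (lorenz_lint_le hneg hint hp1) ENNReal.ofReal_lt_top

end Chunk2

namespace Chunk3

variable {μ : Measure ℝ} [IsProbabilityMeasure μ]
open HAux Chunk2

lemma lorenz_eq (hneg : μ (Iio 0) = 0) {p : ℝ} (hp0 : 0 ≤ p) (hp1 : p ≤ 1) :
    lorenz μ p = (∫⁻ x in Ioi 0, ENNReal.ofReal (p - cdfR μ x)).toReal / mMean μ := by
  rw [lorenz, intervalIntegral.integral_of_le hp0,
    integral_eq_lintegral_of_nonneg_ae (Eventually.of_forall fun t => quant_nonneg t)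
      (quant_aemeasurable hneg hp1).aestronglyMeasurable, lorenz_lintegral hneg hp1]

lemma Abar_eq (hneg : μ (Iio 0) = 0) :
    ∫⁻ x in Ioc 0 (mMean μ), μ (Icc 0 x)
      = ∫⁻ u, ENNReal.ofReal (mMean μ - u) ∂μ := by
  set m := mMean μ with hm
  set k : ℝ → ℝ → ℝ≥0∞ := fun x u => if 0 ≤ u ∧ u ≤ x then 1 else 0 with hk
  have hkm : Measurable (Function.uncurry k) := by
    apply Measurable.ite _ measurable_const measurable_const
    exact (measurableSet_le measurable_const measurable_snd).inter
      (measurableSet_le measurable_snd measurable_fst)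
  have hswap := lintegral_lintegral_swap (μ := volume.restrict (Ioc 0 m)) (ν := μ)
    hkm.aemeasurable
  have hleft : ∫⁻ x in Ioc 0 m, ∫⁻ u, k x u ∂μ = ∫⁻ x in Ioc 0 m, μ (Icc 0 x) := by
    apply lintegral_congr
    intro x
    have h1 : (fun u => k x u) = Set.indicator (Icc (0:ℝ) x) 1 := by
      ext u; simp [hk, Set.indicator_apply, mem_Icc]
    rw [h1, lintegral_indicator_one measurableSet_Icc]
  have hright : ∫⁻ u, (∫⁻ x in Ioc 0 m, k x u) ∂μ
      = ∫⁻ u, ENNReal.ofReal (m - u) ∂μ := by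
    apply lintegral_congr_ae
    have hu : ∀ᵐ u : ℝ ∂μ, 0 ≤ u := by
      rw [ae_iff]; simpa [not_le, Iio] using hneg
    filter_upwards [hu] with u hu0
    have hsmeas : MeasurableSet {x : ℝ | 0 ≤ u ∧ u ≤ x} := by
      rcases le_or_gt 0 u with h | h
      · have : {x : ℝ | 0 ≤ u ∧ u ≤ x} = Ici u := by ext x; simp [h, mem_Ici]
        rw [this]; exact measurableSet_Ici
      · have : {x : ℝ | 0 ≤ u ∧ u ≤ x} = ∅ := by ext x; simp [not_le.mpr h]
        rw [this]; exact MeasurableSet.empty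
    have h1 : (fun x => k x u) = Set.indicator {x : ℝ | 0 ≤ u ∧ u ≤ x} 1 := by
      ext x; simp [hk, Set.indicator_apply]
    rw [h1, lintegral_indicator_one hsmeas, Measure.restrict_apply hsmeas]
    have hseteq : {x : ℝ | 0 ≤ u ∧ u ≤ x} ∩ Ioc 0 m = Ici u ∩ Ioc 0 m := by
      ext x; simp [hu0]
    rw [hseteq]
    apply le_antisymm
    · calc volume (Ici u ∩ Ioc 0 m) ≤ volume (Icc u m) := by
            apply measure_mono
            rintro x ⟨hx1, hx2⟩
            exact ⟨hx1, hx2.2⟩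
        _ = ENNReal.ofReal (m - u) := Real.volume_Icc
    · calc ENNReal.ofReal (m - u) = volume (Ioc u m) := Real.volume_Ioc.symm
        _ ≤ volume (Ici u ∩ Ioc 0 m) := by
            apply measure_mono
            rintro x ⟨hx1, hx2⟩
            exact ⟨hx1.le, lt_of_le_of_lt hu0 hx1, hx2⟩
  rw [← hleft, hswap, hright]

lemma hoover_aux (hneg : μ (Iio 0) = 0) (hint : Integrable id μ) :
    ∫ x, |x - mMean μ| ∂μ
      = 2 * (∫⁻ x in Ioc 0 (mMean μ), μ (Icc 0 x)).toReal := by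
  set m := mMean μ with hm
  have hintid : Integrable (fun x : ℝ => x) μ := hint
  have hint2 : Integrable (fun x : ℝ => m - x) μ := (integrable_const m).sub hintid
  have hint3 : Integrable (fun x : ℝ => max (m - x) 0) μ := hint2.pos_part
  have hint4 : Integrable (fun x : ℝ => x - m) μ := hintid.sub (integrable_const m)
  have hptw : ∀ x : ℝ, |x - m| = (x - m) + 2 * max (m - x) 0 := by
    intro x
    rcases le_total x m with h | h
    · rw [abs_of_nonpos (by linarith), max_eq_left (by linarith)]; ring
    · rw [abs_of_nonneg (by linarith), max_eq_right (by linarith)]; ring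
  have hzero : ∫ x, (x - m) ∂μ = 0 := by
    rw [integral_sub hintid (integrable_const m), integral_const]
    simp [hm, mMean, measure_univ]
  have h2 : ∫ x, |x - m| ∂μ = 2 * ∫ x, max (m - x) 0 ∂μ := by
    calc ∫ x, |x - m| ∂μ = ∫ x, ((x - m) + 2 * max (m - x) 0) ∂μ := by
          apply integral_congr_ae
          exact Eventually.of_forall hptw
      _ = (∫ x, (x - m) ∂μ) + 2 * ∫ x, max (m - x) 0 ∂μ := by
          rw [integral_add hint4 (hint3.const_mul 2), integral_const_mul]
      _ = 2 * ∫ x, max (m - x) 0 ∂μ := by rw [hzero]; ring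
  rw [h2, Abar_eq hneg, ← hm]
  congr 1
  have hofReal : ENNReal.ofReal (∫ x, max (m - x) 0 ∂μ) = ∫⁻ u, ENNReal.ofReal (m - u) ∂μ := by
    rw [ofReal_integral_eq_lintegral_ofReal hint3
      (Eventually.of_forall fun x => le_max_right _ _)]
    apply lintegral_congr
    intro u
    rcases le_total (m - u) 0 with h | h
    · rw [max_eq_right h, ENNReal.ofReal_of_nonpos h, ENNReal.ofReal_zero]
    · rw [max_eq_left h]
  have hnn : (0:ℝ) ≤ ∫ x, max (m - x) 0 ∂μ :=
    integral_nonneg fun x => le_max_right _ _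
  rw [← hofReal, ENNReal.toReal_ofReal hnn]

end Chunk3

namespace Chunk4

variable {μ : Measure ℝ} [IsProbabilityMeasure μ]
open HAux Chunk2 Chunk3

lemma meas_Icc_measurable : Measurable (fun x : ℝ => μ (Icc 0 x)) :=
  Monotone.measurable (fun x y hxy => measure_mono (Icc_subset_Icc_right hxy))

lemma Abar_add (hneg : μ (Iio 0) = 0) {m : ℝ} (hm0 : 0 < m) :
    (∫⁻ x in Ioc 0 m, μ (Icc 0 x)) + (∫⁻ x in Ioc 0 m, μ (Ioi x))
      = ENNReal.ofReal m := by
  rw [← lintegral_add_left meas_Icc_measurable]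
  have h1 : ∫⁻ x in Ioc 0 m, (μ (Icc 0 x) + μ (Ioi x)) = ∫⁻ x in Ioc 0 m, 1 := by
    apply setLIntegral_congr_fun measurableSet_Ioc
    exact fun x hx => compl_split hneg hx.1.le
  rw [h1, setLIntegral_one, Real.volume_Ioc, sub_zero]

lemma c_le {m : ℝ} : (∫⁻ x in Ioc 0 m, μ (Ioi x)) ≤ ENNReal.ofReal m := by
  calc (∫⁻ x in Ioc 0 m, μ (Ioi x)) ≤ ∫⁻ _ in Ioc 0 m, 1 :=
      setLIntegral_mono measurable_const fun x _ => prob_le_one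
    _ = ENNReal.ofReal m := by rw [setLIntegral_one, Real.volume_Ioc, sub_zero]

lemma Abar_le {m : ℝ} : (∫⁻ x in Ioc 0 m, μ (Icc 0 x)) ≤ ENNReal.ofReal m := by
  calc (∫⁻ x in Ioc 0 m, μ (Icc 0 x)) ≤ ∫⁻ _ in Ioc 0 m, 1 :=
      setLIntegral_mono measurable_const fun x _ => prob_le_one
    _ = ENNReal.ofReal m := by rw [setLIntegral_one, Real.volume_Ioc, sub_zero]

lemma split_lint {f : ℝ → ℝ≥0∞} {m : ℝ} (hm0 : 0 < m) :
    ∫⁻ x in Ioi 0, f x = (∫⁻ x in Ioc 0 m, f x) + ∫⁻ x in Ioi m, f x := by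
  rw [← Ioc_union_Ioi_eq_Ioi hm0.le,
    lintegral_union measurableSet_Ioi (Ioc_disjoint_Ioi le_rfl)]

lemma Bbar_eq_Abar (hneg : μ (Iio 0) = 0) (hint : Integrable id μ) (hm0 : 0 < mMean μ) :
    ∫⁻ x in Ioi (mMean μ), μ (Ioi x) = ∫⁻ x in Ioc 0 (mMean μ), μ (Icc 0 x) := by
  have hsplit := (split_lint (f := fun x => μ (Ioi x)) hm0).symm.trans
    (mean_lintegral hneg hint)
  have habar := Abar_add hneg hm0 (μ := μ)
  have hc : (∫⁻ x in Ioc 0 (mMean μ), μ (Ioi x)) ≠ ⊤ :=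
    (lt_of_le_of_lt c_le ENNReal.ofReal_lt_top).ne
  have : (∫⁻ x in Ioc 0 (mMean μ), μ (Ioi x)) + (∫⁻ x in Ioi (mMean μ), μ (Ioi x))
      = (∫⁻ x in Ioc 0 (mMean μ), μ (Ioi x)) + (∫⁻ x in Ioc 0 (mMean μ), μ (Icc 0 x)) := by
    rw [hsplit, add_comm (∫⁻ x in Ioc 0 (mMean μ), μ (Ioi x)), habar]
  exact (ENNReal.add_right_inj hc).mp this

end Chunk4

namespace Chunk5

variable {μ : Measure ℝ} [IsProbabilityMeasure μ]
open HAux Chunk2 Chunk3 Chunk4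

lemma ofReal_max (a : ℝ) : ENNReal.ofReal (max a 0) = ENNReal.ofReal a := by
  rcases le_total a 0 with h | h
  · rw [max_eq_right h, ENNReal.ofReal_of_nonpos h, ENNReal.ofReal_zero]
  · rw [max_eq_left h]

lemma ptw_le {p q : ℝ} (hp0 : 0 ≤ p) (hp1 : p ≤ 1) (hq0 : 0 ≤ q) :
    p * (1 - q) ≤ max (p - q) 0 + (1 - p) * q := by
  rcases le_total q p with h | h
  · rw [max_eq_left (by linarith)]; nlinarith
  · rw [max_eq_right (by linarith)]; nlinarith

lemma ptw_enn_le (hneg : μ (Iio 0) = 0) {p x : ℝ} (hp0 : 0 ≤ p) (hp1 : p ≤ 1)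
    (hx : 0 ≤ x) :
    ENNReal.ofReal p * μ (Ioi x)
      ≤ ENNReal.ofReal (p - cdfR μ x) + ENNReal.ofReal (1 - p) * μ (Icc 0 x) := by
  rw [meas_Ioi_eq hneg hx, ← ofReal_cdfR x, ← ENNReal.ofReal_mul hp0,
    ← ENNReal.ofReal_mul (by linarith : (0:ℝ) ≤ 1 - p),
    ← ofReal_max (p - cdfR μ x),
    ← ENNReal.ofReal_add (le_max_right _ _) (mul_nonneg (by linarith) (cdfR_nonneg x))]
  exact ENNReal.ofReal_le_ofReal (ptw_le hp0 hp1 (cdfR_nonneg x))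

lemma ptw_enn_eq (hneg : μ (Iio 0) = 0) {p x : ℝ} (hp1 : p ≤ 1)
    (hx : 0 ≤ x) (hqp : cdfR μ x ≤ p) :
    ENNReal.ofReal p * μ (Ioi x)
      = ENNReal.ofReal (p - cdfR μ x) + ENNReal.ofReal (1 - p) * μ (Icc 0 x) := by
  have hp0 : 0 ≤ p := le_trans (cdfR_nonneg x) hqp
  rw [meas_Ioi_eq hneg hx, ← ofReal_cdfR x, ← ENNReal.ofReal_mul hp0,
    ← ENNReal.ofReal_mul (by linarith : (0:ℝ) ≤ 1 - p),
    ← ENNReal.ofReal_add (by linarith) (mul_nonneg (by linarith) (cdfR_nonneg x))]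
  congr 1
  ring

lemma ofReal_pF_measurable {p : ℝ} :
    Measurable (fun x => ENNReal.ofReal (p - cdfR μ x)) :=
  ENNReal.continuous_ofReal.measurable.comp (measurable_const.sub cdfR_measurable)

lemma key_le (hneg : μ (Iio 0) = 0) (hint : Integrable id μ) (hm0 : 0 < mMean μ)
    {p : ℝ} (hp0 : 0 ≤ p) (hp1 : p ≤ 1) :
    ENNReal.ofReal p * ENNReal.ofReal (mMean μ)
      ≤ (∫⁻ x in Ioi 0, ENNReal.ofReal (p - cdfR μ x))
        + ∫⁻ x in Ioc 0 (mMean μ), μ (Icc 0 x) := by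
  set m := mMean μ with hmdef
  calc ENNReal.ofReal p * ENNReal.ofReal m
      = (∫⁻ x in Ioc 0 m, ENNReal.ofReal p * μ (Ioi x))
        + ∫⁻ x in Ioi m, ENNReal.ofReal p * μ (Ioi x) := by
        rw [← mean_lintegral hneg hint, split_lint hm0, mul_add,
          lintegral_const_mul _ meas_Ioi_measurable,
          lintegral_const_mul _ meas_Ioi_measurable]
    _ ≤ ((∫⁻ x in Ioc 0 m, ENNReal.ofReal (p - cdfR μ x))
          + ENNReal.ofReal (1-p) * ∫⁻ x in Ioc 0 m, μ (Icc 0 x))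
        + ((∫⁻ x in Ioi m, ENNReal.ofReal (p - cdfR μ x))
          + ENNReal.ofReal p * ∫⁻ x in Ioi m, μ (Ioi x)) := by
        apply add_le_add
        · rw [← lintegral_const_mul _ meas_Icc_measurable,
            ← lintegral_add_left ofReal_pF_measurable]
          apply setLIntegral_mono
            (ofReal_pF_measurable.add (meas_Icc_measurable.const_mul _))
          intro x hx
          exact ptw_enn_le hneg hp0 hp1 hx.1.le
        · rw [← lintegral_const_mul _ meas_Ioi_measurable,
            ← lintegral_add_left ofReal_pF_measurable]
          exact lintegral_mono fun x => le_add_self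
    _ = (∫⁻ x in Ioi 0, ENNReal.ofReal (p - cdfR μ x))
        + (ENNReal.ofReal (1-p) * (∫⁻ x in Ioc 0 m, μ (Icc 0 x))
           + ENNReal.ofReal p * ∫⁻ x in Ioi m, μ (Ioi x)) := by
        rw [split_lint (f := fun x => ENNReal.ofReal (p - cdfR μ x)) hm0]
        ring
    _ = (∫⁻ x in Ioi 0, ENNReal.ofReal (p - cdfR μ x))
        + ∫⁻ x in Ioc 0 m, μ (Icc 0 x) := by
        rw [Bbar_eq_Abar hneg hint hm0, ← add_mul,
          ← ENNReal.ofReal_add (by linarith) hp0, sub_add_cancel,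
          ENNReal.ofReal_one, one_mul]

lemma key_eq (hneg : μ (Iio 0) = 0) (hint : Integrable id μ) (hm0 : 0 < mMean μ) :
    ENNReal.ofReal (cdfR μ (mMean μ)) * ENNReal.ofReal (mMean μ)
      = (∫⁻ x in Ioi 0, ENNReal.ofReal (cdfR μ (mMean μ) - cdfR μ x))
        + ∫⁻ x in Ioc 0 (mMean μ), μ (Icc 0 x) := by
  set m := mMean μ with hmdef
  set p := cdfR μ m with hpdef
  have hp0 : 0 ≤ p := cdfR_nonneg m
  have hp1 : p ≤ 1 := cdfR_le_one m
  have hzero : ∫⁻ x in Ioi m, ENNReal.ofReal (p - cdfR μ x) = 0 := by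
    have : ∫⁻ x in Ioi m, ENNReal.ofReal (p - cdfR μ x)
        = ∫⁻ _ in Ioi m, (0:ℝ≥0∞) := by
      apply setLIntegral_congr_fun measurableSet_Ioi
      exact fun x hx =>
        ENNReal.ofReal_eq_zero.mpr (sub_nonpos.mpr (cdfR_mono hx.le))
    rw [this, lintegral_zero]
  calc ENNReal.ofReal p * ENNReal.ofReal m
      = (∫⁻ x in Ioc 0 m, ENNReal.ofReal p * μ (Ioi x))
        + ∫⁻ x in Ioi m, ENNReal.ofReal p * μ (Ioi x) := by
        rw [← mean_lintegral hneg hint, split_lint hm0, mul_add,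
          lintegral_const_mul _ meas_Ioi_measurable,
          lintegral_const_mul _ meas_Ioi_measurable]
    _ = ((∫⁻ x in Ioc 0 m, ENNReal.ofReal (p - cdfR μ x))
          + ENNReal.ofReal (1-p) * ∫⁻ x in Ioc 0 m, μ (Icc 0 x))
        + ENNReal.ofReal p * ∫⁻ x in Ioi m, μ (Ioi x) := by
        congr 1
        · rw [← lintegral_const_mul _ meas_Icc_measurable,
            ← lintegral_add_left ofReal_pF_measurable]
          apply setLIntegral_congr_fun measurableSet_Ioc
          exact fun x hx =>
            ptw_enn_eq hneg hp1 hx.1.le (cdfR_mono hx.2)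
        · rw [lintegral_const_mul _ meas_Ioi_measurable]
    _ = (∫⁻ x in Ioi 0, ENNReal.ofReal (p - cdfR μ x))
        + ∫⁻ x in Ioc 0 m, μ (Icc 0 x) := by
        rw [split_lint (f := fun x => ENNReal.ofReal (p - cdfR μ x)) hm0, hzero,
          Bbar_eq_Abar hneg hint hm0]
        rw [add_zero, add_assoc, ← add_mul,
          ← ENNReal.ofReal_add (by linarith) hp0, sub_add_cancel,
          ENNReal.ofReal_one, one_mul]

end Chunk5

namespace Chunk6

variable {μ : Measure ℝ} [IsProbabilityMeasure μ]
open HAux Chunk2 Chunk3 Chunk4 Chunk5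

lemma hoover_eq_Abar (hneg : μ (Iio 0) = 0) (hint : Integrable id μ) (hm0 : 0 < mMean μ) :
    hoover μ = (∫⁻ x in Ioc 0 (mMean μ), μ (Icc 0 x)).toReal / mMean μ := by
  rw [hoover, hoover_aux hneg hint]
  field_simp

lemma diff_le (hneg : μ (Iio 0) = 0) (hint : Integrable id μ) (hm0 : 0 < mMean μ)
    {p : ℝ} (hp0 : 0 ≤ p) (hp1 : p ≤ 1) : p - lorenz μ p ≤ hoover μ := by
  set m := mMean μ with hmdef
  set I := (∫⁻ x in Ioi 0, ENNReal.ofReal (p - cdfR μ x)) with hIdef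
  set A := (∫⁻ x in Ioc 0 m, μ (Icc 0 x)) with hAdef
  have hIne : I ≠ ⊤ :=
    (lt_of_le_of_lt (lorenz_lint_le hneg hint hp1) ENNReal.ofReal_lt_top).ne
  have hAne : A ≠ ⊤ := (lt_of_le_of_lt Abar_le ENNReal.ofReal_lt_top).ne
  have hkey := key_le hneg hint hm0 hp0 hp1
  have hreal : p * m ≤ I.toReal + A.toReal := by
    have h1 := ENNReal.toReal_mono (ENNReal.add_ne_top.mpr ⟨hIne, hAne⟩) hkey
    rwa [ENNReal.toReal_mul, ENNReal.toReal_ofReal hp0, ENNReal.toReal_ofReal hm0.le,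
      ENNReal.toReal_add hIne hAne] at h1
  rw [lorenz_eq hneg hp0 hp1, hoover_eq_Abar hneg hint hm0]
  rw [sub_le_iff_le_add, ← add_div, le_div_iff₀ hm0]
  linarith

lemma diff_eq (hneg : μ (Iio 0) = 0) (hint : Integrable id μ) (hm0 : 0 < mMean μ) :
    hoover μ = cdfR μ (mMean μ) - lorenz μ (cdfR μ (mMean μ)) := by
  set m := mMean μ with hmdef
  set p := cdfR μ m with hpdef
  have hp0 : 0 ≤ p := cdfR_nonneg m
  have hp1 : p ≤ 1 := cdfR_le_one m
  set I := (∫⁻ x in Ioi 0, ENNReal.ofReal (p - cdfR μ x)) with hIdef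
  set A := (∫⁻ x in Ioc 0 m, μ (Icc 0 x)) with hAdef
  have hIne : I ≠ ⊤ :=
    (lt_of_le_of_lt (lorenz_lint_le hneg hint hp1) ENNReal.ofReal_lt_top).ne
  have hAne : A ≠ ⊤ := (lt_of_le_of_lt Abar_le ENNReal.ofReal_lt_top).ne
  have hkey := key_eq hneg hint hm0
  have hreal : p * m = I.toReal + A.toReal := by
    have h1 := congrArg ENNReal.toReal hkey
    rwa [ENNReal.toReal_mul, ENNReal.toReal_ofReal hp0, ENNReal.toReal_ofReal hm0.le,
      ENNReal.toReal_add hIne hAne] at h1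
  rw [lorenz_eq hneg hp0 hp1, hoover_eq_Abar hneg hint hm0]
  have h2 : I.toReal / m + A.toReal / m = p := by
    rw [← add_div, div_eq_iff hm0.ne']
    linarith
  linarith

end Chunk6

end Aux

open MeasureTheory Filter Topology in
/-- `H(μ)` is the maximum of `p − L_μ(p)` over `p ∈ [0,1]`, attained
in particular at `p = F_μ(m_μ)`. -/
theorem hoover_eq_max_diag_sub_lorenz (μ : Measure ℝ) (hμ : MemM μ) :
    IsGreatest {y : ℝ | ∃ p ∈ Set.Icc (0:ℝ) 1, y = p - lorenz μ p} (hoover μ) ∧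
    hoover μ = cdfR μ (mMean μ) - lorenz μ (cdfR μ (mMean μ)) := by
  obtain ⟨hprob, hneg, hint, hm0⟩ := hμ
  haveI := hprob
  have hneg' : μ (Set.Iio 0) = 0 := hneg
  have hsecond := Chunk6.diff_eq hneg' hint hm0
  refine ⟨⟨⟨cdfR μ (mMean μ), ⟨HAux.cdfR_nonneg _, HAux.cdfR_le_one _⟩, hsecond⟩, ?_⟩, hsecond⟩
  rintro y ⟨p, hp, rfl⟩
  exact Chunk6.diff_le hneg' hint hm0 hp.1 hp.2
end

section
/- Fix h ∈ (0,1). Then the set of Gini coefficients of measures with Hoover coefficient h is exactly the half-open interval [h, 2h − h²): {G(μ) : μ ∈ 𝐌, H(μ) = h} = [h, 2h − h²). -/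
open MeasureTheory Filter Topology

namespace GiniAux

open MeasureTheory

lemma integrable_dirac' (f : ℝ → ℝ) (a : ℝ) : Integrable f (Measure.dirac a) := by
  constructor
  · refine (aestronglyMeasurable_const (b := f a)).congr ?_
    rw [MeasureTheory.ae_dirac_eq]
    exact Filter.eventually_pure.2 rfl
  · rw [HasFiniteIntegral, lintegral_dirac]
    exact ENNReal.coe_lt_top

noncomputable def trip (p q r a b c : ℝ) : Measure ℝ :=
  ENNReal.ofReal p • Measure.dirac a + ENNReal.ofReal q • Measure.dirac b
    + ENNReal.ofReal r • Measure.dirac c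

lemma integrable_trip (p q r a b c : ℝ) (f : ℝ → ℝ) : Integrable f (trip p q r a b c) := by
  unfold trip
  exact (((integrable_dirac' f a).smul_measure ENNReal.ofReal_ne_top).add_measure
    ((integrable_dirac' f b).smul_measure ENNReal.ofReal_ne_top)).add_measure
    ((integrable_dirac' f c).smul_measure ENNReal.ofReal_ne_top)

lemma integral_trip {p q r : ℝ} (hp : 0 ≤ p) (hq : 0 ≤ q) (hr : 0 ≤ r) (a b c : ℝ)
    (f : ℝ → ℝ) : ∫ x, f x ∂(trip p q r a b c) = p * f a + q * f b + r * f c := by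
  unfold trip
  rw [integral_add_measure (((integrable_dirac' f a).smul_measure ENNReal.ofReal_ne_top).add_measure
      ((integrable_dirac' f b).smul_measure ENNReal.ofReal_ne_top))
      ((integrable_dirac' f c).smul_measure ENNReal.ofReal_ne_top),
    integral_add_measure ((integrable_dirac' f a).smul_measure ENNReal.ofReal_ne_top)
      ((integrable_dirac' f b).smul_measure ENNReal.ofReal_ne_top),
    integral_smul_measure, integral_smul_measure, integral_smul_measure,
    integral_dirac, integral_dirac, integral_dirac,
    ENNReal.toReal_ofReal hp, ENNReal.toReal_ofReal hq, ENNReal.toReal_ofReal hr]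
  simp [smul_eq_mul]

lemma integrable_absSub (μ : Measure ℝ) [IsProbabilityMeasure μ] (hμ : Integrable id μ) :
    Integrable (fun z : ℝ × ℝ => |z.1 - z.2|) (μ.prod μ) := by
  have h1 : Integrable (fun z : ℝ × ℝ => z.1) (μ.prod μ) := by
    simpa using hμ.mul_prod (integrable_const (1 : ℝ))
  have h2 : Integrable (fun z : ℝ × ℝ => z.2) (μ.prod μ) := by
    simpa using (integrable_const (1 : ℝ)).mul_prod hμ
  exact (h1.sub h2).abs



lemma keyineq_mul {m x y : ℝ} (hm : 0 < m) (hx : 0 ≤ x) (hy : 0 ≤ y) :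
    m * |x - y| + 2 * m * min (max (x - m) 0) (max (y - m) 0)
      + 2 * (max (m - x) 0 * max (m - y) 0) ≤ m * (|x - m| + |y - m|) := by
  rcases le_total x m with h1 | h1 <;> rcases le_total y m with h2 | h2
  · rw [max_eq_right (by linarith : x - m ≤ 0), max_eq_right (by linarith : y - m ≤ 0),
      min_self, max_eq_left (by linarith : (0:ℝ) ≤ m - x),
      max_eq_left (by linarith : (0:ℝ) ≤ m - y),
      abs_of_nonpos (by linarith : x - m ≤ 0), abs_of_nonpos (by linarith : y - m ≤ 0)]
    rcases le_total x y with h3 | h3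
    · rw [abs_of_nonpos (by linarith : x - y ≤ 0)]
      nlinarith [mul_nonneg hx (by linarith : (0:ℝ) ≤ m - y)]
    · rw [abs_of_nonneg (by linarith : (0:ℝ) ≤ x - y)]
      nlinarith [mul_nonneg hy (by linarith : (0:ℝ) ≤ m - x)]
  · rw [max_eq_right (by linarith : x - m ≤ 0),
      min_eq_left (le_max_right (y-m) 0),
      max_eq_right (by linarith : m - y ≤ 0),
      abs_of_nonpos (by linarith : x - m ≤ 0), abs_of_nonneg (by linarith : (0:ℝ) ≤ y - m),
      abs_of_nonpos (by linarith : x - y ≤ 0)]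
    nlinarith []
  · rw [max_eq_right (by linarith : y - m ≤ 0),
      min_eq_right (le_max_right (x-m) 0),
      max_eq_right (by linarith : m - x ≤ 0),
      abs_of_nonneg (by linarith : (0:ℝ) ≤ x - m), abs_of_nonpos (by linarith : y - m ≤ 0),
      abs_of_nonneg (by linarith : (0:ℝ) ≤ x - y)]
    nlinarith []
  · rw [max_eq_left (by linarith : (0:ℝ) ≤ x - m), max_eq_left (by linarith : (0:ℝ) ≤ y - m),
      max_eq_right (by linarith : m - x ≤ 0), max_eq_right (by linarith : m - y ≤ 0),
      abs_of_nonneg (by linarith : (0:ℝ) ≤ x - m), abs_of_nonneg (by linarith : (0:ℝ) ≤ y - m)]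
    rcases le_total x y with h3 | h3
    · rw [min_eq_left (by linarith), abs_of_nonpos (by linarith : x - y ≤ 0)]
      nlinarith []
    · rw [min_eq_right (by linarith), abs_of_nonneg (by linarith : (0:ℝ) ≤ x - y)]
      nlinarith []

lemma keyineq {m x y : ℝ} (hm : 0 < m) (hx : 0 ≤ x) (hy : 0 ≤ y) :
    |x - y| + 2 * min (max (x - m) 0) (max (y - m) 0)
      ≤ |x - m| + |y - m| - (2 / m) * (max (m - x) 0 * max (m - y) 0) := by
  have H := keyineq_mul hm hx hy
  have key : (2 / m) * (max (m - x) 0 * max (m - y) 0)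
      ≤ (|x - m| + |y - m|) - |x - y| - 2 * min (max (x - m) 0) (max (y - m) 0) := by
    rw [div_mul_eq_mul_div, div_le_iff₀ hm]
    nlinarith [H]
  linarith

lemma hoover_le_gini {μ : Measure ℝ} (hM : MemM μ) : hoover μ ≤ gini μ := by
  obtain ⟨hprob, _, hint, hm⟩ := hM
  haveI := hprob
  set m := mMean μ with hm_def
  have hintf : Integrable (fun x : ℝ => x) μ := hint
  have hDint : Integrable (fun x => |x - m|) μ := (hintf.sub (integrable_const m)).abs
  have key : ∀ x : ℝ, |x - m| ≤ ∫ y, |x - y| ∂μ := by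
    intro x
    have e : x - m = ∫ y, (x - y) ∂μ := by
      rw [integral_sub (integrable_const x) hintf, integral_const]
      simp [hm_def, mMean]
    calc |x - m| = ‖∫ y, (x - y) ∂μ‖ := by rw [← e, Real.norm_eq_abs]
      _ ≤ ∫ y, ‖x - y‖ ∂μ := norm_integral_le_integral_norm _
      _ = ∫ y, |x - y| ∂μ := by simp [Real.norm_eq_abs]
  have hFint := integrable_absSub μ hint
  have hS : (∫ z : ℝ × ℝ, |z.1 - z.2| ∂(μ.prod μ)) = ∫ x, ∫ y, |x - y| ∂μ ∂μ :=
    MeasureTheory.integral_prod _ hFint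
  have hmono : ∫ x, |x - m| ∂μ ≤ ∫ x, ∫ y, |x - y| ∂μ ∂μ :=
    integral_mono hDint hFint.integral_prod_left key
  rw [hoover, gini, hS]
  have h2m : 0 < 2 * m := by linarith
  exact (div_le_div_iff_of_pos_right h2m).2 hmono


lemma gini_lt_upper {μ : Measure ℝ} (hM : MemM μ) (hpos : 0 < hoover μ) :
    gini μ < 2 * hoover μ - hoover μ ^ 2 := by
  obtain ⟨hprob, h00, hint, hm⟩ := hM
  haveI := hprob
  set m := mMean μ with hm_def
  set D := ∫ x, |x - m| ∂μ with hD_def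
  have h2m : 0 < 2 * m := by linarith
  have hH : hoover μ = D / (2 * m) := rfl
  have hintf : Integrable (fun x : ℝ => x) μ := hint
  have hDint : Integrable (fun x => |x - m|) μ := (hintf.sub (integrable_const m)).abs
  have hD0 : 0 < D := by
    have h' := mul_pos (hH ▸ hpos) h2m
    rwa [div_mul_cancel₀ _ (ne_of_gt h2m)] at h'
  -- the two auxiliary functions
  set g : ℝ → ℝ := fun x => max (m - x) 0 with hg_def
  set g' : ℝ → ℝ := fun x => max (x - m) 0 with hg'_def
  have hg_int : Integrable g μ := ((integrable_const m).sub hintf).pos_part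
  have hg'_int : Integrable g' μ := (hintf.sub (integrable_const m)).pos_part
  have hmean_int : (∫ x, (m - x) ∂μ) = 0 := by
    rw [integral_sub (integrable_const m) hintf, integral_const]
    simp [hm_def, mMean]
  have hb : (∫ x, g x ∂μ) = D / 2 := by
    have e1 : (∫ x, (g x + g' x) ∂μ) = D := by
      rw [hD_def]
      refine integral_congr_ae (Filter.Eventually.of_forall fun x => ?_)
      rcases le_total x m with h | h
      · rw [hg_def, hg'_def]
        simp only []
        rw [max_eq_left (by linarith : (0:ℝ) ≤ m - x), max_eq_right (by linarith : x - m ≤ 0),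
          abs_of_nonpos (by linarith : x - m ≤ 0)]
        ring
      · rw [hg_def, hg'_def]
        simp only []
        rw [max_eq_right (by linarith : m - x ≤ 0), max_eq_left (by linarith : (0:ℝ) ≤ x - m),
          abs_of_nonneg (by linarith : (0:ℝ) ≤ x - m)]
        ring
    have e2 : (∫ x, (g x - g' x) ∂μ) = 0 := by
      rw [← hmean_int]
      refine integral_congr_ae (Filter.Eventually.of_forall fun x => ?_)
      rcases le_total x m with h | h
      · rw [hg_def, hg'_def]
        simp only []
        rw [max_eq_left (by linarith : (0:ℝ) ≤ m - x), max_eq_right (by linarith : x - m ≤ 0)]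
        ring
      · rw [hg_def, hg'_def]
        simp only []
        rw [max_eq_right (by linarith : m - x ≤ 0), max_eq_left (by linarith : (0:ℝ) ≤ x - m)]
        ring
    rw [integral_add hg_int hg'_int] at e1
    rw [integral_sub hg_int hg'_int] at e2
    linarith
  -- integrability on the product
  have hA1 : Integrable (fun z : ℝ × ℝ => |z.1 - m|) (μ.prod μ) := by
    simpa using hDint.mul_prod (integrable_const (1 : ℝ))
  have hA2 : Integrable (fun z : ℝ × ℝ => |z.2 - m|) (μ.prod μ) := by
    simpa using (integrable_const (1 : ℝ)).mul_prod hDint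
  have hA3 : Integrable (fun z : ℝ × ℝ => g z.1 * g z.2) (μ.prod μ) := hg_int.mul_prod hg_int
  have hg'cont : Continuous g' := by
    rw [hg'_def]; exact (continuous_id.sub continuous_const).max continuous_const
  have hA4 : Integrable (fun z : ℝ × ℝ => min (g' z.1) (g' z.2)) (μ.prod μ) := by
    refine Integrable.mono' hA1 ?_ (Filter.Eventually.of_forall fun z => ?_)
    · exact ((hg'cont.comp continuous_fst).min (hg'cont.comp continuous_snd)).aestronglyMeasurable
    · rw [Real.norm_eq_abs,
        abs_of_nonneg (le_min (le_max_right _ _) (le_max_right _ _))]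
      calc min (g' z.1) (g' z.2) ≤ g' z.1 := min_le_left _ _
        _ ≤ |z.1 - m| := by rw [hg'_def]; exact max_le (le_abs_self _) (abs_nonneg _)
  have hFint := integrable_absSub μ hint
  -- a.e. nonnegativity on the product
  have hae1 : ∀ᵐ z : ℝ × ℝ ∂(μ.prod μ), 0 ≤ z.1 := by
    rw [MeasureTheory.ae_iff]
    refine measure_mono_null (fun z hz => ?_) (?_ : (μ.prod μ) ({x : ℝ | x < 0} ×ˢ (Set.univ : Set ℝ)) = 0)
    · simp only [Set.mem_setOf_eq, not_le] at hz
      exact ⟨hz, Set.mem_univ _⟩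
    · rw [Measure.prod_prod, h00, zero_mul]
  have hae2 : ∀ᵐ z : ℝ × ℝ ∂(μ.prod μ), 0 ≤ z.2 := by
    rw [MeasureTheory.ae_iff]
    refine measure_mono_null (fun z hz => ?_) (?_ : (μ.prod μ) ((Set.univ : Set ℝ) ×ˢ {x : ℝ | x < 0}) = 0)
    · simp only [Set.mem_setOf_eq, not_le] at hz
      exact ⟨Set.mem_univ _, hz⟩
    · rw [Measure.prod_prod, h00, mul_zero]
  -- the main pointwise comparison, integrated
  have hmono : (∫ z : ℝ × ℝ, |z.1 - z.2| ∂(μ.prod μ))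
      ≤ ∫ z : ℝ × ℝ, (|z.1 - m| + |z.2 - m| - (2 / m) * (g z.1 * g z.2)
          - 2 * min (g' z.1) (g' z.2)) ∂(μ.prod μ) := by
    refine integral_mono_ae hFint
      (((hA1.add hA2).sub (hA3.const_mul (2 / m))).sub (hA4.const_mul 2)) ?_
    filter_upwards [hae1, hae2] with z hz1 hz2
    have := keyineq (by linarith : (0:ℝ) < m) hz1 hz2
    rw [hg_def, hg'_def]
    simp only []
    linarith [this]
  have hval : (∫ z : ℝ × ℝ, (|z.1 - m| + |z.2 - m| - (2 / m) * (g z.1 * g z.2)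
      - 2 * min (g' z.1) (g' z.2)) ∂(μ.prod μ))
      = D + D - (2 / m) * ((D / 2) * (D / 2))
        - 2 * ∫ z : ℝ × ℝ, min (g' z.1) (g' z.2) ∂(μ.prod μ) := by
    have hB1 : Integrable (fun z : ℝ × ℝ => |z.1 - m| + |z.2 - m|) (μ.prod μ) := hA1.add hA2
    have hB2 : Integrable (fun z : ℝ × ℝ => 2 / m * (g z.1 * g z.2)) (μ.prod μ) :=
      hA3.const_mul _
    have hB3 : Integrable
        (fun z : ℝ × ℝ => |z.1 - m| + |z.2 - m| - 2 / m * (g z.1 * g z.2)) (μ.prod μ) :=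
      hB1.sub hB2
    have hB4 : Integrable (fun z : ℝ × ℝ => 2 * min (g' z.1) (g' z.2)) (μ.prod μ) :=
      hA4.const_mul 2
    rw [show (fun z : ℝ × ℝ => |z.1 - m| + |z.2 - m| - 2 / m * (g z.1 * g z.2)
        - 2 * min (g' z.1) (g' z.2))
      = (fun z : ℝ × ℝ => (|z.1 - m| + |z.2 - m| - 2 / m * (g z.1 * g z.2))
        - 2 * min (g' z.1) (g' z.2)) from rfl,
      integral_sub hB3 hB4, integral_sub hB1 hB2,
      integral_add hA1 hA2, integral_const_mul, integral_const_mul]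
    have v1 : (∫ z : ℝ × ℝ, |z.1 - m| ∂(μ.prod μ)) = D := by
      have := MeasureTheory.integral_prod_mul (μ := μ) (ν := μ)
        (fun x => |x - m|) (fun _ => (1 : ℝ))
      simpa using this
    have v2 : (∫ z : ℝ × ℝ, |z.2 - m| ∂(μ.prod μ)) = D := by
      have := MeasureTheory.integral_prod_mul (μ := μ) (ν := μ)
        (fun _ => (1 : ℝ)) (fun x => |x - m|)
      simpa using this
    have v3 : (∫ z : ℝ × ℝ, g z.1 * g z.2 ∂(μ.prod μ)) = (D / 2) * (D / 2) := by
      rw [MeasureTheory.integral_prod_mul (μ := μ) (ν := μ) g g, hb]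
    rw [v1, v2, v3]
  -- positivity of the correction term
  have hIoi : μ (Set.Ioi m) ≠ 0 := by
    intro hc
    have hae_le : ∀ᵐ x ∂μ, x ≤ m := by
      rw [MeasureTheory.ae_iff]
      refine measure_mono_null (fun x hx => ?_) hc
      simpa using hx
    have hz : (∫ x, (m - x) ∂μ) = 0 := hmean_int
    have hnn : 0 ≤ᵐ[μ] fun x => m - x :=
      hae_le.mono fun x hx => by simpa using (by linarith : (0:ℝ) ≤ m - x)
    have := (integral_eq_zero_iff_of_nonneg_ae hnn ((integrable_const m).sub hintf)).1 hz
    have hD : D = 0 := by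
      rw [hD_def]
      rw [show (0:ℝ) = ∫ _x : ℝ, (0:ℝ) ∂μ by simp]
      refine integral_congr_ae (this.mono fun x hx => ?_)
      have : m - x = 0 := hx
      have : x - m = 0 := by linarith
      simp [this]
    linarith
  obtain ⟨n, hn⟩ : ∃ n : ℕ, μ (Set.Ici (m + ((n : ℝ) + 1)⁻¹)) ≠ 0 := by
    by_contra hc
    push_neg at hc
    refine hIoi (measure_mono_null (fun x hx => ?_) (measure_iUnion_null fun n : ℕ => hc n))
    simp only [Set.mem_Ioi] at hx
    obtain ⟨n, hn⟩ := exists_nat_one_div_lt (by linarith : (0:ℝ) < x - m)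
    refine Set.mem_iUnion.2 ⟨n, ?_⟩
    rw [Set.mem_Ici]
    rw [one_div] at hn
    linarith
  set δ : ℝ := ((n : ℝ) + 1)⁻¹ with hδ_def
  have hδ0 : 0 < δ := by positivity
  set C : Set ℝ := Set.Ici (m + δ) with hC_def
  set M := ∫ z : ℝ × ℝ, min (g' z.1) (g' z.2) ∂(μ.prod μ) with hM_def
  have hMpos : 0 < M := by
    have hprod_meas : (μ.prod μ) (C ×ˢ C) = μ C * μ C := by
      rw [Measure.prod_prod]
    have hlow : δ * ((μ.prod μ) (C ×ˢ C)).toReal ≤ ∫ z in C ×ˢ C, min (g' z.1) (g' z.2) ∂(μ.prod μ) := by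
      refine setIntegral_ge_of_const_le_real (measurableSet_Ici.prod measurableSet_Ici)
        (measure_ne_top _ _) (fun z hz => ?_) hA4.integrableOn
      obtain ⟨hz1, hz2⟩ := hz
      rw [Set.mem_Ici] at hz1 hz2
      refine le_min ?_ ?_ <;> · rw [hg'_def]; exact le_max_of_le_left (by linarith)
    have hup : (∫ z in C ×ˢ C, min (g' z.1) (g' z.2) ∂(μ.prod μ)) ≤ M := by
      rw [hM_def]
      exact setIntegral_le_integral hA4 (Filter.Eventually.of_forall fun z =>
        le_min (le_max_right _ _) (le_max_right _ _))
    have hpos' : 0 < ((μ.prod μ) (C ×ˢ C)).toReal := by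
      rw [hprod_meas]
      exact ENNReal.toReal_pos (mul_ne_zero hn hn)
        (ENNReal.mul_ne_top (measure_ne_top _ _) (measure_ne_top _ _))
    calc (0:ℝ) < δ * ((μ.prod μ) (C ×ˢ C)).toReal := mul_pos hδ0 hpos'
      _ ≤ _ := le_trans hlow hup
  -- conclusion
  have hG : gini μ = (∫ z : ℝ × ℝ, |z.1 - z.2| ∂(μ.prod μ)) / (2 * m) := rfl
  rw [hG, hH, div_lt_iff₀ h2m]
  have hrhs : (2 * (D / (2 * m)) - (D / (2 * m)) ^ 2) * (2 * m)
      = D + D - (2 / m) * ((D / 2) * (D / 2)) := by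
    field_simp
    ring
  rw [hrhs]
  have := hmono
  rw [hval] at this
  linarith

lemma construction {h q : ℝ} (hh0 : 0 < h) (hq0 : 0 ≤ q) (hlt : h + q < 1) :
    ∃ μ : Measure ℝ, MemM μ ∧ hoover μ = h ∧ gini μ = h * (1 + q) := by
  set r : ℝ := 1 - h - q with hr_def
  have hr0 : 0 < r := by rw [hr_def]; linarith
  set K : ℝ := (1 - q) / r with hK_def
  have hrK : r * K = 1 - q := by
    rw [hK_def, mul_div_assoc', mul_div_cancel_left₀ _ hr0.ne']
  have hK1 : 1 ≤ K := by
    rw [hK_def, le_div_iff₀ hr0]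
    linarith [hr_def]
  have hK0 : 0 ≤ K := le_trans zero_le_one hK1
  set μ : Measure ℝ := trip h q r 0 1 K with hμ_def
  have hprob : IsProbabilityMeasure μ := by
    constructor
    rw [hμ_def]
    unfold trip
    simp only [Measure.add_apply, Measure.smul_apply, measure_univ, smul_eq_mul, mul_one]
    rw [← ENNReal.ofReal_add hh0.le hq0, ← ENNReal.ofReal_add (by linarith) hr0.le]
    norm_num [hr_def]
  haveI := hprob
  have hmean : mMean μ = 1 := by
    rw [mMean, hμ_def, integral_trip hh0.le hq0 hr0.le]
    simpa using by linarith [hrK]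
  have hint : Integrable id μ := by rw [hμ_def]; exact integrable_trip _ _ _ _ _ _ _
  refine ⟨μ, ⟨hprob, ?_, hint, by rw [hmean]; norm_num⟩, ?_, ?_⟩
  · rw [hμ_def]
    unfold trip
    simp only [Measure.add_apply, Measure.smul_apply, smul_eq_mul]
    rw [show {x : ℝ | x < 0} = Set.Iio 0 from rfl]
    rw [Measure.dirac_apply, Measure.dirac_apply, Measure.dirac_apply]
    simp [Set.indicator, not_lt.2 hK0]
  · rw [hoover, hmean, hμ_def, integral_trip hh0.le hq0 hr0.le]
    have h1 : |(0:ℝ) - 1| = 1 := by norm_num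
    have h2 : |(1:ℝ) - 1| = 0 := by norm_num
    have h3 : |K - 1| = K - 1 := abs_of_nonneg (by linarith)
    rw [h1, h2, h3]
    have : h * 1 + q * 0 + r * (K - 1) = 2 * h := by nlinarith [hrK]
    rw [this]; field_simp
  · rw [gini, hmean]
    have hS : ∫ z : ℝ × ℝ, |z.1 - z.2| ∂(μ.prod μ) = 2 * h * (1 + q) := by
      rw [MeasureTheory.integral_prod _ (integrable_absSub μ hint)]
      have inner : ∀ x : ℝ, (∫ y, |x - y| ∂μ) = h * |x - 0| + q * |x - 1| + r * |x - K| := by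
        intro x
        rw [hμ_def, integral_trip hh0.le hq0 hr0.le 0 1 K (fun y => |x - y|)]
      simp_rw [inner]
      rw [hμ_def, integral_trip hh0.le hq0 hr0.le 0 1 K
        (fun x => h * |x - 0| + q * |x - 1| + r * |x - K|)]
      have a1 : |(0:ℝ) - 0| = 0 := by norm_num
      have a2 : |(0:ℝ) - 1| = 1 := by norm_num
      have a3 : |(0:ℝ) - K| = K := by rw [zero_sub, abs_neg, abs_of_nonneg hK0]
      have a4 : |(1:ℝ) - 1| = 0 := by norm_num
      have a5 : |(1:ℝ) - K| = K - 1 := by rw [abs_sub_comm]; exact abs_of_nonneg (by linarith)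
      have a6 : |K - 1| = K - 1 := abs_of_nonneg (by linarith)
      have a7 : |K - K| = 0 := by norm_num
      have a8 : |K - 0| = K := by rw [sub_zero]; exact abs_of_nonneg hK0
      have a9 : |(1:ℝ) - 0| = 1 := by norm_num
      rw [a1, a2, a3, a4, a5, a6, a7, a8, a9]
      nlinarith [hrK]
    rw [hS]; field_simp

end GiniAux

/-- For `h ∈ (0,1)`, the set of Gini coefficients of measures of `𝐌`
with Hoover coefficient `h` is exactly `[h, 2h − h²)`. -/
theorem gini_range_of_hoover_eq (h : ℝ) (hh : h ∈ Set.Ioo (0:ℝ) 1) :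
    {g : ℝ | ∃ μ : Measure ℝ, MemM μ ∧ hoover μ = h ∧ gini μ = g} =
      Set.Ico h (2 * h - h ^ 2) := by
  ext g
  simp only [Set.mem_setOf_eq, Set.mem_Ico]
  constructor
  · rintro ⟨μ, hM, hHov, hGin⟩
    subst hGin
    refine ⟨?_, ?_⟩
    · rw [← hHov]; exact GiniAux.hoover_le_gini hM
    · have := GiniAux.gini_lt_upper hM (by rw [hHov]; exact hh.1)
      rwa [hHov] at this
  · rintro ⟨hg1, hg2⟩
    have hh0 := hh.1
    set q : ℝ := g / h - 1 with hq_def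
    have hq0 : 0 ≤ q := by
      rw [hq_def]
      have : (1:ℝ) ≤ g / h := (le_div_iff₀ hh0).2 (by linarith)
      linarith
    have hlt : h + q < 1 := by
      rw [hq_def]
      have : g / h < 2 - h := by rw [div_lt_iff₀ hh0]; nlinarith [hg2]
      linarith
    obtain ⟨μ, hM, hHov, hGin⟩ := GiniAux.construction hh0 hq0 hlt
    refine ⟨μ, hM, hHov, ?_⟩
    rw [hGin, hq_def]
    field_simp
    ring
end
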